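/- arXiv:2510.26572 — 3 statements merged into one kernel-verified Lean document; each statement's English description precedes it below -/
import Mathlib

section
/- For all μ, ν ∈ M_G(X), one has ρ̄(μ,ν) = 0 if and only if μ = ν. -/
open MeasureTheory Filter Topology Pointwise

/-- A (left) Følner sequence in `G`: a sequence of nonempty finite subsets of `G` with
`|gFₙ Δ Fₙ|/|Fₙ| → 0` for every `g ∈ G`. -/
def IsFolner {G : Type*} [Group G] [DecidableEq G] (F : ℕ → Finset G) : Prop :=
  (∀ n, (F n).Nonempty) ∧
  ∀ g : G, Tendsto (fun n => ((symmDiff (g • F n) (F n)).card : ℝ) / ((F n).card : ℝ))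
    atTop (nhds 0)

/-- A two-sided Følner sequence in `G`: left Følner and `|Fₙg Δ Fₙ|/|Fₙ| → 0` for all `g`. -/
def IsTwoSidedFolner {G : Type*} [Group G] [DecidableEq G] (F : ℕ → Finset G) : Prop :=
  IsFolner F ∧
  ∀ g : G, Tendsto (fun n => ((symmDiff ((F n).image (fun h => h * g)) (F n)).card : ℝ) /
    ((F n).card : ℝ)) atTop (nhds 0)

/-- A tempered Følner sequence: `|⋃_{k ≤ n} Fₖ⁻¹ F_{n+1}| ≤ C|F_{n+1}|` for some `C > 0`. -/
def IsTempered {G : Type*} [Group G] [DecidableEq G] (F : ℕ → Finset G) : Prop :=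
  ∃ C : ℝ, 0 < C ∧ ∀ n : ℕ,
    ((((Finset.range (n+1)).biUnion fun k => (F k)⁻¹ * F (n+1)).card : ℝ)) ≤
      C * ((F (n+1)).card : ℝ)

/-- The upper asymptotic density of `A ⊆ G` along the Følner sequence `F`. -/
noncomputable def upperDensity {G : Type*} [Group G] (F : ℕ → Finset G) (A : Set G) : ℝ :=
  limsup (fun N => (Nat.card ↥(A ∩ (F N : Set G)) : ℝ) / ((F N).card : ℝ)) atTop

section Action

variable (G : Type*) [Group G] (X : Type*) [MetricSpace X] [CompactSpace X]
  [MeasurableSpace X] [BorelSpace X] [MulAction G X]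

/-- A Borel measure on `X` is `G`-invariant. -/
def IsInvariantMeasure (μ : Measure X) : Prop :=
  ∀ g : G, Measure.map (fun x : X => g • x) μ = μ

/-- Ergodicity: every `G`-invariant Borel set has measure `0` or `1`. -/
def IsErgodicMeasure (μ : Measure X) : Prop :=
  ∀ s : Set X, MeasurableSet s → (∀ g : G, (fun x : X => g • x) ⁻¹' s = s) →
    μ s = 0 ∨ μ s = 1

/-- `x` is generic for `μ` along the Følner sequence `F`: the empirical measures
`(1/|Fₙ|) Σ_{f ∈ Fₙ} δ_{f•x}` converge to `μ` in the weak* topology, i.e. the averages of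
every continuous function converge to its integral. -/
def IsGenericPt (F : ℕ → Finset G) (x : X) (μ : Measure X) : Prop :=
  ∀ φ : C(X, ℝ),
    Tendsto (fun n => (∑ f ∈ F n, φ (f • x)) / ((F n).card : ℝ)) atTop
      (nhds (∫ a, φ a ∂μ))

/-- The Besicovitch pseudometric along the Følner sequence `F`. -/
noncomputable def Besicovitch (F : ℕ → Finset G) (x z : X) : ℝ :=
  limsup (fun N => (∑ g ∈ F N, dist (g • x) (g • z)) / ((F N).card : ℝ)) atTop

/-- `lam` is a joining of `μ` and `ν`: a probability measure on `X × X`, invariant under the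
diagonal `G`-action, with marginals `μ` and `ν`. -/
def IsJoining (lam : Measure (X × X)) (μ ν : Measure X) : Prop :=
  IsProbabilityMeasure lam ∧
  lam.map Prod.fst = μ ∧ lam.map Prod.snd = ν ∧
  ∀ g : G, lam.map (fun p : X × X => (g • p.1, g • p.2)) = lam

/-- The distance `ρ̄(μ,ν) = inf_{λ ∈ J(μ,ν)} ∫ d dλ`. -/
noncomputable def rhoBar (μ ν : Measure X) : ℝ :=
  sInf {r : ℝ | ∃ lam : Measure (X × X), IsJoining G X lam μ ν ∧ r = ∫ p, dist p.1 p.2 ∂lam}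

/-- `D̄_{B,F}(x,ν) = inf{D_{B,F}(x,z) : z ∈ Gen_F(ν)}`, with values in `[0,∞]`
(the infimum of the empty set being `∞`). -/
noncomputable def DBarToMeasure (F : ℕ → Finset G) (ν : Measure X) (x : X) : ENNReal :=
  ⨅ z ∈ {z : X | IsGenericPt G X F z ν}, ENNReal.ofReal (Besicovitch G X F x z)

/-- `ω̂_F(x)`: the set of weak* subsequential limits of the empirical measures of `x`
along `F` (the measures for which `x` is quasigeneric along `F`). -/
def omegaHat (F : ℕ → Finset G) (x : X) : Set (ProbabilityMeasure X) :=
  {μ | ∃ k : ℕ → ℕ, StrictMono k ∧ ∀ φ : C(X, ℝ),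
    Tendsto (fun n => (∑ f ∈ F (k n), φ (f • x)) / ((F (k n)).card : ℝ)) atTop
      (nhds (∫ a, φ a ∂(μ : Measure X)))}

/-- `ν` is a joining of the countable family `μs`: a probability measure on `Xᴺ`,
invariant under the coordinatewise `G`-action, whose `m`-th marginal is `μs m`. -/
def IsCountableJoining (ν : Measure (ℕ → X)) (μs : ℕ → Measure X) : Prop :=
  IsProbabilityMeasure ν ∧
  (∀ g : G, ν.map (fun ω : ℕ → X => fun i => g • ω i) = ν) ∧
  ∀ m : ℕ, ν.map (fun ω : ℕ → X => ω m) = μs m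

/-- `(X,G,μ)` is a factor of `(Xᴺ,G,ν)` (with the coordinatewise action on `Xᴺ`). -/
def IsFactorOfProduct (ν : Measure (ℕ → X)) (μ : Measure X) : Prop :=
  ∃ π : (ℕ → X) → X, Measurable π ∧
    (∀ g : G, ∀ᵐ ω ∂ν, π (fun i => g • ω i) = g • π ω) ∧ ν.map π = μ

/-- Ergodicity of a measure on `Xᴺ` with respect to the coordinatewise `G`-action. -/
def IsErgodicProductMeasure (ν : Measure (ℕ → X)) : Prop :=
  ∀ s : Set (ℕ → X), MeasurableSet s →
    (∀ g : G, (fun ω : ℕ → X => fun i => g • ω i) ⁻¹' s = s) → ν s = 0 ∨ ν s = 1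

end Action

/-- `ρ̄(μ,ν) = 0` if and only if `μ = ν`. -/
theorem stmt1 {G : Type*} [Group G] [Countable G] [DecidableEq G]
    {X : Type*} [MetricSpace X] [CompactSpace X] [MeasurableSpace X] [BorelSpace X]
    [MulAction G X] (hact : ∀ g : G, Continuous fun x : X => g • x)
    (μ ν : Measure X) [IsProbabilityMeasure μ] [IsProbabilityMeasure ν]
    (hμinv : IsInvariantMeasure G X μ) (hνinv : IsInvariantMeasure G X ν) :
    rhoBar G X μ ν = 0 ↔ μ = ν := by
  classical
  have hmg : ∀ g : G, Measurable (fun x : X => g • x) := fun g => (hact g).measurable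
  constructor
  · -- forward direction
    intro h
    -- the set of joining integrals is nonempty (product joining) and bounded below by 0
    have hprod : IsJoining G X (μ.prod ν) μ ν := by
      refine ⟨inferInstance, ?_, ?_, ?_⟩
      · simp [Measure.map_fst_prod]
      · simp [Measure.map_snd_prod]
      · intro g
        have heq : (fun p : X × X => (g • p.1, g • p.2))
            = Prod.map (fun x : X => g • x) (fun x : X => g • x) := rfl
        rw [heq, ← Measure.map_prod_map _ _ (hmg g) (hmg g), hμinv g, hνinv g]
    have hSne : {r : ℝ | ∃ lam : Measure (X × X), IsJoining G X lam μ ν ∧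
        r = ∫ p, dist p.1 p.2 ∂lam}.Nonempty := ⟨_, μ.prod ν, hprod, rfl⟩
    -- equal integrals of all bounded continuous real functions
    have key : ∀ f : BoundedContinuousFunction X ℝ, ∫ x, f x ∂μ = ∫ x, f x ∂ν := by
      intro f
      have habs : ∀ ε : ℝ, 0 < ε → |∫ x, f x ∂μ - ∫ x, f x ∂ν| ≤ ε := by
        intro ε hε
        have huc : UniformContinuous f :=
          CompactSpace.uniformContinuous_of_continuous f.continuous
        obtain ⟨δ, hδ, hδ'⟩ := Metric.uniformContinuous_iff.mp huc (ε/2) (by positivity)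
        set M : ℝ := ‖f‖ + 1 with hM
        have hM0 : 0 < M := by have := norm_nonneg f; positivity
        have hc0 : 0 ≤ 2*M/δ := by positivity
        have hpt : ∀ p : X × X, |f p.1 - f p.2| ≤ ε/2 + (2*M/δ) * dist p.1 p.2 := by
          intro p
          rcases lt_or_ge (dist p.1 p.2) δ with hlt | hge
          · have := hδ' hlt
            rw [Real.dist_eq] at this
            have : |f p.1 - f p.2| ≤ ε/2 := le_of_lt this
            nlinarith [dist_nonneg (x := p.1) (y := p.2)]
          · have h1 : |f p.1 - f p.2| ≤ 2 * M := by
              have h2 := f.norm_coe_le_norm p.1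
              have h3 := f.norm_coe_le_norm p.2
              rw [Real.norm_eq_abs] at h2 h3
              have := abs_sub (f p.1) (f p.2)
              calc |f p.1 - f p.2| ≤ |f p.1| + |f p.2| := abs_sub _ _
                _ ≤ 2 * M := by simp only [hM]; linarith
            have h4 : 2 * M ≤ (2*M/δ) * dist p.1 p.2 := by
              rw [div_mul_eq_mul_div, le_div_iff₀ hδ]
              nlinarith
            linarith
        -- pick a joining with small integral
        obtain ⟨r, hrS, hrlt⟩ :
            ∃ r ∈ {r : ℝ | ∃ lam : Measure (X × X), IsJoining G X lam μ ν ∧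
              r = ∫ p, dist p.1 p.2 ∂lam}, r < ε * δ / (4 * M) := by
          obtain ⟨r, hr, hlt⟩ := Real.lt_sInf_add_pos hSne
            (show (0:ℝ) < ε * δ / (4 * M) by positivity)
          refine ⟨r, hr, ?_⟩
          have : sInf {r : ℝ | ∃ lam : Measure (X × X), IsJoining G X lam μ ν ∧
              r = ∫ p, dist p.1 p.2 ∂lam} = 0 := h
          linarith [this ▸ hlt]
        obtain ⟨lam, ⟨hlp, hfst, hsnd, _⟩, hrq⟩ := hrS
        haveI := hlp
        -- bounded continuous functions on X × X
        set F1 : BoundedContinuousFunction (X × X) ℝ := f.compContinuous ⟨Prod.fst, continuous_fst⟩ with hF1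
        set F2 : BoundedContinuousFunction (X × X) ℝ := f.compContinuous ⟨Prod.snd, continuous_snd⟩ with hF2
        set D : BoundedContinuousFunction (X × X) ℝ :=
          BoundedContinuousFunction.mkOfCompact ⟨fun p : X × X => dist p.1 p.2,
            continuous_dist⟩ with hD
        have hDint : Integrable (fun p : X × X => dist p.1 p.2) lam := by
          have := D.integrable lam
          exact this
        have hIμ : ∫ x, f x ∂μ = ∫ p : X × X, f p.1 ∂lam := by
          rw [← hfst, integral_map measurable_fst.aemeasurable
            f.continuous.measurable.aestronglyMeasurable]
        have hIν : ∫ x, f x ∂ν = ∫ p : X × X, f p.2 ∂lam := by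
          rw [← hsnd, integral_map measurable_snd.aemeasurable
            f.continuous.measurable.aestronglyMeasurable]
        have hint1 : Integrable (fun p : X × X => f p.1) lam := by
          have := F1.integrable lam; exact this
        have hint2 : Integrable (fun p : X × X => f p.2) lam := by
          have := F2.integrable lam; exact this
        have hsub : ∫ x, f x ∂μ - ∫ x, f x ∂ν
            = ∫ p : X × X, (f p.1 - f p.2) ∂lam := by
          rw [hIμ, hIν, integral_sub hint1 hint2]
        rw [hsub]
        have hbound : |∫ p : X × X, (f p.1 - f p.2) ∂lam|
            ≤ ∫ p : X × X, (ε/2 + (2*M/δ) * dist p.1 p.2) ∂lam := by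
          calc |∫ p : X × X, (f p.1 - f p.2) ∂lam|
              ≤ ∫ p : X × X, |f p.1 - f p.2| ∂lam := by
                simpa [Real.norm_eq_abs] using
                  norm_integral_le_integral_norm (fun p : X × X => f p.1 - f p.2) (μ := lam)
            _ ≤ ∫ p : X × X, (ε/2 + (2*M/δ) * dist p.1 p.2) ∂lam := by
                refine integral_mono (hint1.sub hint2).abs ?_ hpt
                exact (integrable_const (ε/2)).add (hDint.const_mul _)
        have hval : ∫ p : X × X, (ε/2 + (2*M/δ) * dist p.1 p.2) ∂lam
            = ε/2 + (2*M/δ) * r := by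
          rw [integral_add (integrable_const _) (hDint.const_mul _),
            integral_const, integral_const_mul, ← hrq]
          simp
        have hfinal : (2*M/δ) * r ≤ ε/2 := by
          have hrpos : (0:ℝ) ≤ r := by
            rw [hrq]; exact integral_nonneg fun p => dist_nonneg
          have : (2*M/δ) * r ≤ (2*M/δ) * (ε * δ / (4 * M)) := by
            apply mul_le_mul_of_nonneg_left (le_of_lt hrlt) hc0
          calc (2*M/δ) * r ≤ (2*M/δ) * (ε * δ / (4 * M)) := this
            _ = ε/2 := by field_simp; ring
        calc |∫ p : X × X, (f p.1 - f p.2) ∂lam|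
            ≤ ε/2 + (2*M/δ) * r := by rw [← hval]; exact hbound
          _ ≤ ε := by linarith
      -- conclude equality
      have h0 : |∫ x, f x ∂μ - ∫ x, f x ∂ν| ≤ 0 := by
        by_contra hcon
        push_neg at hcon
        have := habs (|∫ x, f x ∂μ - ∫ x, f x ∂ν| / 2) (by linarith)
        linarith
      have := abs_nonneg (∫ x, f x ∂μ - ∫ x, f x ∂ν)
      have : |∫ x, f x ∂μ - ∫ x, f x ∂ν| = 0 := le_antisymm h0 this
      linarith [abs_eq_zero.mp this, sub_eq_zero.mp (abs_eq_zero.mp this)]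
    -- pass from real to ℝ≥0 valued and conclude
    apply MeasureTheory.ext_of_forall_lintegral_eq_of_IsFiniteMeasure
    intro f
    have h1 : ∫⁻ x, f x ∂μ < ⊤ := f.lintegral_lt_top_of_nnreal μ
    have h2 : ∫⁻ x, f x ∂ν < ⊤ := f.lintegral_lt_top_of_nnreal ν
    rw [← ENNReal.toReal_eq_toReal_iff' h1.ne h2.ne,
      BoundedContinuousFunction.toReal_lintegral_coe_eq_integral,
      BoundedContinuousFunction.toReal_lintegral_coe_eq_integral]
    have := key (BoundedContinuousFunction.mkOfCompact
      ⟨fun x => (f x : ℝ), NNReal.continuous_coe.comp f.continuous⟩)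
    simpa using this
  · -- reverse direction: diagonal joining
    rintro rfl
    have hdiag : Measurable fun x : X => (x, x) := measurable_id.prodMk measurable_id
    set lam : Measure (X × X) := μ.map (fun x => (x, x)) with hlam
    have hj : IsJoining G X lam μ μ := by
      refine ⟨Measure.isProbabilityMeasure_map hdiag.aemeasurable, ?_, ?_, ?_⟩
      · rw [hlam, Measure.map_map measurable_fst hdiag]
        exact Measure.map_id
      · rw [hlam, Measure.map_map measurable_snd hdiag]
        exact Measure.map_id
      · intro g
        have hg2 : Measurable fun p : X × X => (g • p.1, g • p.2) :=
          ((hmg g).comp measurable_fst).prodMk ((hmg g).comp measurable_snd)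
        rw [hlam, Measure.map_map hg2 hdiag]
        have heq : ((fun p : X × X => (g • p.1, g • p.2)) ∘ fun x : X => (x, x))
            = (fun x : X => (x, x)) ∘ (fun x : X => g • x) := rfl
        rw [heq, ← Measure.map_map hdiag (hmg g), hμinv g]
    have hint : ∫ p : X × X, dist p.1 p.2 ∂lam = 0 := by
      rw [hlam, integral_map hdiag.aemeasurable
        continuous_dist.measurable.aestronglyMeasurable]
      simp
    have hmem : (0:ℝ) ∈ {r : ℝ | ∃ lam : Measure (X × X), IsJoining G X lam μ μ ∧
        r = ∫ p, dist p.1 p.2 ∂lam} := ⟨lam, hj, hint.symm⟩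
    have hlb : ∀ r ∈ {r : ℝ | ∃ lam : Measure (X × X), IsJoining G X lam μ μ ∧
        r = ∫ p, dist p.1 p.2 ∂lam}, (0:ℝ) ≤ r := by
      rintro r ⟨lam', hj', rfl⟩
      exact integral_nonneg fun p => dist_nonneg
    exact le_antisymm (csInf_le ⟨0, hlb⟩ hmem) (le_csInf ⟨0, hmem⟩ hlb)
end

section
/- The function ρ̄ is a metric on M_G(X): it is nonnegative, symmetric, satisfies the triangle inequality, and ρ̄(μ,ν) = 0 if and only if μ = ν. -/
open MeasureTheory Filter Topology Pointwise

section AuxRho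
set_option linter.unusedSectionVars false
set_option linter.unusedVariables false
open ProbabilityTheory BoundedContinuousFunction

variable {G : Type*} [Group G] [Countable G]
  {X : Type*} [MetricSpace X] [CompactSpace X] [MeasurableSpace X] [BorelSpace X]
  [MulAction G X] (hact : ∀ g : G, Continuous fun x : X => g • x)
  {μ ν : Measure X}

lemma aux_nonneg {r : ℝ}
    (hr : r ∈ {r : ℝ | ∃ lam : Measure (X × X), IsJoining G X lam μ ν ∧
      r = ∫ p, dist p.1 p.2 ∂lam}) : 0 ≤ r := by
  obtain ⟨lam, -, rfl⟩ := hr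
  exact integral_nonneg fun p => dist_nonneg

lemma aux_bdd : BddBelow {r : ℝ | ∃ lam : Measure (X × X), IsJoining G X lam μ ν ∧
      r = ∫ p, dist p.1 p.2 ∂lam} :=
  ⟨0, fun r hr => aux_nonneg hr⟩

include hact in
lemma aux_prod_joining (hμp : IsProbabilityMeasure μ) (hνp : IsProbabilityMeasure ν)
    (hμ : IsInvariantMeasure G X μ) (hν : IsInvariantMeasure G X ν) :
    IsJoining G X (μ.prod ν) μ ν := by
  refine ⟨by infer_instance, by simp, by simp, fun g => ?_⟩
  have : (fun p : X × X => (g • p.1, g • p.2)) = Prod.map (fun x : X => g • x) (fun x : X => g • x) := rfl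
  rw [this, ← Measure.map_prod_map _ _ (hact g).measurable (hact g).measurable, hμ g, hν g]

include hact in
lemma aux_set_nonempty (hμp : IsProbabilityMeasure μ) (hνp : IsProbabilityMeasure ν)
    (hμ : IsInvariantMeasure G X μ) (hν : IsInvariantMeasure G X ν) :
    {r : ℝ | ∃ lam : Measure (X × X), IsJoining G X lam μ ν ∧
      r = ∫ p, dist p.1 p.2 ∂lam}.Nonempty :=
  ⟨_, μ.prod ν, aux_prod_joining hact hμp hνp hμ hν, rfl⟩

include hact in
lemma aux_swap_joining {lam : Measure (X × X)} (h : IsJoining G X lam μ ν) :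
    IsJoining G X (lam.map Prod.swap) ν μ := by
  obtain ⟨hp, h1, h2, hinv⟩ := h
  haveI := hp
  refine ⟨by exact Measure.isProbabilityMeasure_map measurable_swap.aemeasurable, ?_, ?_, fun g => ?_⟩
  · rw [Measure.map_map measurable_fst measurable_swap]; exact h2
  · rw [Measure.map_map measurable_snd measurable_swap]; exact h1
  · have hm : Measurable (fun p : X × X => (g • p.1, g • p.2)) :=
      ((hact g).measurable.comp measurable_fst).prodMk ((hact g).measurable.comp measurable_snd)
    rw [Measure.map_map hm measurable_swap, show (fun p : X × X => (g • p.1, g • p.2)) ∘ Prod.swap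
      = Prod.swap ∘ (fun p : X × X => (g • p.1, g • p.2)) from rfl,
      ← Measure.map_map measurable_swap hm, hinv g]

include hact in
lemma aux_symm : rhoBar G X μ ν = rhoBar G X ν μ := by
  unfold rhoBar
  congr 1
  ext r
  constructor
  · rintro ⟨lam, h, rfl⟩
    haveI := h.1
    refine ⟨lam.map Prod.swap, aux_swap_joining hact h, ?_⟩
    rw [integral_map measurable_swap.aemeasurable]
    · simp [dist_comm]
    · exact (continuous_dist.comp (continuous_fst.prodMk continuous_snd)).aestronglyMeasurable
  · rintro ⟨lam, h, rfl⟩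
    haveI := h.1
    refine ⟨lam.map Prod.swap, aux_swap_joining hact h, ?_⟩
    rw [integral_map measurable_swap.aemeasurable]
    · simp [dist_comm]
    · exact (continuous_dist.comp (continuous_fst.prodMk continuous_snd)).aestronglyMeasurable

include hact in
lemma aux_diag_joining (hμp : IsProbabilityMeasure μ) (hμ : IsInvariantMeasure G X μ) :
    IsJoining G X (μ.map (fun x => (x, x))) μ μ := by
  haveI := hμp
  have hd : Measurable (fun x : X => (x, x)) := measurable_id.prodMk measurable_id
  refine ⟨Measure.isProbabilityMeasure_map hd.aemeasurable, ?_, ?_, fun g => ?_⟩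
  · rw [Measure.map_map measurable_fst hd]; simp [Function.comp_def]
  · rw [Measure.map_map measurable_snd hd]; simp [Function.comp_def]
  · have hm : Measurable (fun p : X × X => (g • p.1, g • p.2)) :=
      ((hact g).measurable.comp measurable_fst).prodMk ((hact g).measurable.comp measurable_snd)
    rw [Measure.map_map hm hd,
      show (fun p : X × X => (g • p.1, g • p.2)) ∘ (fun x : X => (x, x))
        = (fun x : X => (x, x)) ∘ (fun x : X => g • x) from rfl,
      ← Measure.map_map hd (hact g).measurable, hμ g]

include hact in
lemma aux_rhoBar_self (hμp : IsProbabilityMeasure μ) (hμ : IsInvariantMeasure G X μ) :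
    rhoBar G X μ μ = 0 := by
  have hd : Measurable (fun x : X => (x, x)) := measurable_id.prodMk measurable_id
  have h0 : (0:ℝ) ∈ {r : ℝ | ∃ lam : Measure (X × X), IsJoining G X lam μ μ ∧
      r = ∫ p, dist p.1 p.2 ∂lam} := by
    refine ⟨μ.map (fun x => (x, x)), aux_diag_joining hact hμp hμ, ?_⟩
    have : ∫ p : X × X, dist p.1 p.2 ∂(μ.map (fun x => (x, x))) = ∫ x : X, dist x x ∂μ :=
      integral_map hd.aemeasurable
        (continuous_dist.comp (continuous_fst.prodMk continuous_snd)).aestronglyMeasurable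
    simp [this]
  exact le_antisymm (csInf_le aux_bdd h0) (le_csInf ⟨0, h0⟩ fun r hr => aux_nonneg hr)

include hact in
lemma aux_eq_of_rhoBar_zero (hμp : IsProbabilityMeasure μ) (hνp : IsProbabilityMeasure ν)
    (hμ : IsInvariantMeasure G X μ) (hν : IsInvariantMeasure G X ν)
    (hmem : {r : ℝ | ∃ lam : Measure (X × X), IsJoining G X lam μ ν ∧
      r = ∫ p, dist p.1 p.2 ∂lam}.Nonempty)
    (h0 : rhoBar G X μ ν = 0) : μ = ν := by
  haveI := hμp; haveI := hνp
  have key : ∀ f : X →ᵇ ℝ, ∫ x, f x ∂μ = ∫ x, f x ∂ν := by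
    intro f
    have hub : ∀ ε : ℝ, 0 < ε → |∫ x, f x ∂μ - ∫ x, f x ∂ν| ≤ ε := by
      intro ε hε
      obtain ⟨δ, hδ, hfδ⟩ := Metric.uniformContinuous_iff.mp
        (CompactSpace.uniformContinuous_of_continuous f.continuous) (ε/2) (by linarith)
      set C : ℝ := 2 * ‖f‖ / δ with hC
      have hC0 : 0 ≤ C := div_nonneg (by positivity) hδ.le
      have hpt : ∀ x y : X, |f x - f y| ≤ ε/2 + C * dist x y := by
        intro x y
        rcases lt_or_ge (dist x y) δ with h | h
        · have hlt : dist (f x) (f y) < ε / 2 := hfδ h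
          rw [Real.dist_eq] at hlt
          nlinarith [mul_nonneg hC0 (dist_nonneg (x := x) (y := y))]
        · have h1 : |f x - f y| ≤ 2 * ‖f‖ := by
            have := f.dist_le_two_norm x y
            rwa [Real.dist_eq] at this
          have h2 : 2 * ‖f‖ ≤ C * dist x y := by
            rw [hC, div_mul_eq_mul_div, le_div_iff₀ hδ]
            nlinarith [norm_nonneg f]
          linarith
      set ε' : ℝ := (ε/2) / (C + 1) with hε'
      have hε'0 : 0 < ε' := by positivity
      have : rhoBar G X μ ν < ε' := by rw [h0]; exact hε'0
      obtain ⟨r, hr, hrε⟩ := exists_lt_of_csInf_lt hmem this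
      obtain ⟨lam, ⟨hlp, h1, h2, -⟩, rfl⟩ := hr
      haveI := hlp
      have hdistc : Continuous (fun p : X × X => dist p.1 p.2) :=
        continuous_dist.comp (continuous_fst.prodMk continuous_snd)
      have hμint : ∫ x, f x ∂μ = ∫ p : X × X, f p.1 ∂lam := by
        rw [← h1, integral_map measurable_fst.aemeasurable
          f.continuous.aestronglyMeasurable]
      have hνint : ∫ x, f x ∂ν = ∫ p : X × X, f p.2 ∂lam := by
        rw [← h2, integral_map measurable_snd.aemeasurable
          f.continuous.aestronglyMeasurable]
      set F₁ : (X × X) →ᵇ ℝ := f.compContinuous ⟨Prod.fst, continuous_fst⟩ with hF₁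
      set F₂ : (X × X) →ᵇ ℝ := f.compContinuous ⟨Prod.snd, continuous_snd⟩ with hF₂
      set D : (X × X) →ᵇ ℝ := BoundedContinuousFunction.mkOfCompact ⟨_, hdistc⟩ with hD
      have hsub : ∫ x, f x ∂μ - ∫ x, f x ∂ν = ∫ p, (F₁ p - F₂ p) ∂lam := by
        rw [hμint, hνint, integral_sub (F₁.integrable lam) (F₂.integrable lam)]; rfl
      have habs : |∫ p, (F₁ p - F₂ p) ∂lam| ≤ ∫ p, |F₁ p - F₂ p| ∂lam := by
        simpa [Real.norm_eq_abs] using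
          norm_integral_le_integral_norm (fun p : X × X => F₁ p - F₂ p) (μ := lam)
      have hmono : ∫ p, |F₁ p - F₂ p| ∂lam ≤ ∫ p, (ε/2 + C * D p) ∂lam := by
        refine integral_mono ((F₁ - F₂).integrable lam |>.abs) ?_ ?_
        · exact (integrable_const (ε/2)).add ((D.integrable lam).const_mul C)
        · intro p
          exact hpt p.1 p.2
      have hval : ∫ p, (ε/2 + C * D p) ∂lam = ε/2 + C * ∫ p, dist p.1 p.2 ∂lam := by
        rw [integral_add (integrable_const _) ((D.integrable lam).const_mul C),
          integral_const, integral_const_mul]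
        simp [hD, measure_univ]
      have hfinal : C * ∫ p, dist p.1 p.2 ∂lam ≤ ε/2 := by
        have hrn : 0 ≤ ∫ p, dist p.1 p.2 ∂lam := integral_nonneg fun p => dist_nonneg
        have : C * ∫ p, dist p.1 p.2 ∂lam ≤ C * ε' := by
          exact mul_le_mul_of_nonneg_left hrε.le hC0
        have h2 : C * ε' ≤ (C + 1) * ε' := by nlinarith
        have h3 : (C + 1) * ε' = ε/2 := by
          rw [hε']; field_simp
        linarith
      rw [hsub]
      calc |∫ p, (F₁ p - F₂ p) ∂lam| ≤ ∫ p, |F₁ p - F₂ p| ∂lam := habs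
        _ ≤ ε/2 + C * ∫ p, dist p.1 p.2 ∂lam := by rw [← hval] at *; exact hmono
        _ ≤ ε := by linarith
    by_contra hne
    have h1 : 0 < |∫ x, f x ∂μ - ∫ x, f x ∂ν| := abs_pos.mpr (sub_ne_zero.mpr hne)
    linarith [hub (|∫ x, f x ∂μ - ∫ x, f x ∂ν| / 2) (by linarith)]
  apply ext_of_forall_lintegral_eq_of_IsFiniteMeasure
  intro f
  have hc : Continuous fun x => ((f x : ℝ)) := NNReal.continuous_coe.comp f.continuous
  set g : X →ᵇ ℝ := BoundedContinuousFunction.mkOfCompact ⟨_, hc⟩ with hg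
  have h1 := lintegral_coe_eq_integral (fun x => f x) (μ := μ) (g.integrable μ)
  have h2 := lintegral_coe_eq_integral (fun x => f x) (μ := ν) (g.integrable ν)
  rw [h1, h2]
  congr 1
  exact key g


include hact in
lemma aux_equivariant {η : Measure X} [IsProbabilityMeasure η] [Nonempty X]
    (hη : IsInvariantMeasure G X η)
    {ρ : Measure (X × X)} [IsProbabilityMeasure ρ] (hfst : ρ.fst = η)
    (hinv : ∀ g : G, ρ.map (fun p : X × X => (g • p.1, g • p.2)) = ρ) (g : G) :
    ∀ᵐ y ∂η, ((ρ.condKernel (g⁻¹ • y)).map (fun x : X => g • x)) = ρ.condKernel y := by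
  have hT : Measurable (fun x : X => g • x) := (hact g).measurable
  have hT' : Measurable (fun y : X => g⁻¹ • y) := (hact g⁻¹).measurable
  set T : X → X := fun x => g • x with hTdef
  set κ' : Kernel X X := Kernel.map (Kernel.comap ρ.condKernel (fun y => g⁻¹ • y) hT') T
    with hκ'
  have hκ'app : ∀ y, κ' y = (ρ.condKernel (g⁻¹ • y)).map T := fun y => by
    rw [hκ', Kernel.map_apply _ hT, Kernel.comap_apply]
  haveI : IsMarkovKernel (Kernel.comap ρ.condKernel (fun y : X => g⁻¹ • y) hT') := by
    infer_instance
  haveI : IsMarkovKernel κ' := Kernel.IsMarkovKernel.map _ hT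
  have hcomp : ρ = ρ.fst ⊗ₘ κ' := by
    have hdis : η ⊗ₘ ρ.condKernel = ρ := by rw [← hfst]; exact ρ.disintegrate _
    rw [hfst]
    ext s hs
    have hTT : Measurable (fun p : X × X => (g • p.1, g • p.2)) :=
      (hT.comp measurable_fst).prodMk (hT.comp measurable_snd)
    have hstep1 : ρ s = ρ ((fun p : X × X => (g • p.1, g • p.2)) ⁻¹' s) := by
      conv_lhs => rw [← hinv g]
      rw [Measure.map_apply hTT hs]
    have hstep2 : ρ ((fun p : X × X => (g • p.1, g • p.2)) ⁻¹' s)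
        = ∫⁻ y, ρ.condKernel y (Prod.mk y ⁻¹' ((fun p : X × X => (g • p.1, g • p.2)) ⁻¹' s)) ∂η := by
      conv_lhs => rw [← hdis]
      rw [Measure.compProd_apply (hTT hs)]
    have hptwise : ∀ y, ρ.condKernel y (Prod.mk y ⁻¹' ((fun p : X × X => (g • p.1, g • p.2)) ⁻¹' s))
        = (fun z => κ' z (Prod.mk z ⁻¹' s)) (T y) := by
      intro y
      show ρ.condKernel y (Prod.mk y ⁻¹' ((fun p : X × X => (g • p.1, g • p.2)) ⁻¹' s))
        = κ' (T y) (Prod.mk (T y) ⁻¹' s)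
      rw [hκ'app (T y)]
      have hTy : g⁻¹ • T y = y := by simp [hTdef]
      rw [hTy, Measure.map_apply hT (measurable_prodMk_left hs)]
      rfl
    have hmeas : Measurable fun z => κ' z (Prod.mk z ⁻¹' s) :=
      Kernel.measurable_kernel_prodMk_left hs
    rw [hstep1, hstep2, Measure.compProd_apply hs]
    have h1 : ∫⁻ y, ρ.condKernel y (Prod.mk y ⁻¹' ((fun p : X × X => (g • p.1, g • p.2)) ⁻¹' s)) ∂η
        = ∫⁻ y, (fun z => κ' z (Prod.mk z ⁻¹' s)) (T y) ∂η := lintegral_congr hptwise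
    have h2 : ∫⁻ y, (fun z => κ' z (Prod.mk z ⁻¹' s)) (T y) ∂η
        = ∫⁻ z, κ' z (Prod.mk z ⁻¹' s) ∂(η.map T) := (lintegral_map hmeas hT).symm
    rw [h1, h2, hη g]
  have huniq := eq_condKernel_of_measure_eq_compProd κ' hcomp
  rw [hfst] at huniq
  filter_upwards [huniq] with y hy
  rw [← hy, hκ'app]


include hact in
lemma aux_equivariant' {η : Measure X} [IsProbabilityMeasure η] [Nonempty X]
    (hη : IsInvariantMeasure G X η)
    {ρ : Measure (X × X)} [IsProbabilityMeasure ρ] (hfst : ρ.fst = η)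
    (hinv : ∀ g : G, ρ.map (fun p : X × X => (g • p.1, g • p.2)) = ρ) (g : G) :
    ∀ᵐ y ∂η, ρ.condKernel (g • y) = (ρ.condKernel y).map (fun x : X => g • x) := by
  filter_upwards [aux_equivariant hact hη hfst hinv g⁻¹] with y hy
  simp only [inv_inv] at hy
  have := congrArg (fun m : Measure X => m.map (fun x : X => g • x)) hy
  rw [← this, Measure.map_map (hact g).measurable (hact g⁻¹).measurable]
  have : ((fun x : X => g • x) ∘ fun x : X => g⁻¹ • x) = id := by
    funext x; simp
  rw [this, Measure.map_id]

include hact in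
lemma aux_compose {μ η ν : Measure X} (hμp : IsProbabilityMeasure μ)
    (hηp : IsProbabilityMeasure η) (hνp : IsProbabilityMeasure ν)
    (hη : IsInvariantMeasure G X η)
    {lam₁ lam₂ : Measure (X × X)} (hl1 : IsJoining G X lam₁ μ η)
    (hl2 : IsJoining G X lam₂ η ν) :
    ∃ lam : Measure (X × X), IsJoining G X lam μ ν ∧
      ∫ p, dist p.1 p.2 ∂lam ≤ ∫ p, dist p.1 p.2 ∂lam₁ + ∫ p, dist p.1 p.2 ∂lam₂ := by
  haveI := hμp; haveI := hηp; haveI := hνp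
  haveI : Nonempty X := η.nonempty_of_neZero
  obtain ⟨hl1p, hl1f, hl1s, hl1i⟩ := hl1
  obtain ⟨hl2p, hl2f, hl2s, hl2i⟩ := hl2
  haveI := hl1p; haveI := hl2p
  -- the swapped first joining
  set ρ₁ : Measure (X × X) := lam₁.map Prod.swap with hρ₁def
  haveI : IsProbabilityMeasure ρ₁ := Measure.isProbabilityMeasure_map measurable_swap.aemeasurable
  have hρ₁fst : ρ₁.fst = η := by
    rw [hρ₁def, Measure.fst, Measure.map_map measurable_fst measurable_swap]
    exact hl1s
  have hρ₁snd : ρ₁.map Prod.snd = μ := by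
    rw [hρ₁def, Measure.map_map measurable_snd measurable_swap]
    exact hl1f
  have hρ₁inv : ∀ g : G, ρ₁.map (fun p : X × X => (g • p.1, g • p.2)) = ρ₁ := by
    intro g
    have hm : Measurable (fun p : X × X => (g • p.1, g • p.2)) :=
      ((hact g).measurable.comp measurable_fst).prodMk ((hact g).measurable.comp measurable_snd)
    rw [hρ₁def, Measure.map_map hm measurable_swap,
      show (fun p : X × X => (g • p.1, g • p.2)) ∘ Prod.swap
        = Prod.swap ∘ (fun p : X × X => (g • p.1, g • p.2)) from rfl,
      ← Measure.map_map measurable_swap hm, hl1i g]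
  have hl2fst : lam₂.fst = η := by rw [Measure.fst]; exact hl2f
  set κ₁ : Kernel X X := ρ₁.condKernel with hκ₁def
  set κ₂ : Kernel X X := lam₂.condKernel with hκ₂def
  have hdis₁ : η ⊗ₘ κ₁ = ρ₁ := by rw [← hρ₁fst]; exact ρ₁.disintegrate _
  have hdis₂ : η ⊗ₘ κ₂ = lam₂ := by rw [← hl2fst]; exact lam₂.disintegrate _
  set K : Kernel X (X × X) := κ₁ ×ₖ κ₂ with hKdef
  set lam : Measure (X × X) := η.bind K with hlamdef
  have hbind : ∀ s : Set (X × X), MeasurableSet s → lam s = ∫⁻ y, K y s ∂η := by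
    intro s hs
    rw [hlamdef, Measure.bind_apply hs K.measurable.aemeasurable]
  have hKapp : ∀ y, K y = (κ₁ y).prod (κ₂ y) := fun y => Kernel.prod_apply _ _ _
  haveI hlamp : IsProbabilityMeasure lam := by
    constructor
    rw [hbind Set.univ MeasurableSet.univ]
    simp [measure_univ]
  refine ⟨lam, ⟨hlamp, ?_, ?_, ?_⟩, ?_⟩
  · -- first marginal is μ
    ext s hs
    rw [Measure.map_apply measurable_fst hs, hbind _ (measurable_fst hs)]
    have h1 : ∀ y, K y (Prod.fst ⁻¹' s) = κ₁ y s := by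
      intro y
      rw [hKapp, ← Measure.map_apply measurable_fst hs, Measure.map_fst_prod]
      simp [measure_univ]
    have h2 : μ s = ∫⁻ y, κ₁ y s ∂η := by
      rw [← hρ₁snd, Measure.map_apply measurable_snd hs, ← hdis₁,
        Measure.compProd_apply (measurable_snd hs)]
      rfl
    rw [h2]
    exact lintegral_congr h1
  · -- second marginal is ν
    ext s hs
    rw [Measure.map_apply measurable_snd hs, hbind _ (measurable_snd hs)]
    have h1 : ∀ y, K y (Prod.snd ⁻¹' s) = κ₂ y s := by
      intro y
      rw [hKapp, ← Measure.map_apply measurable_snd hs, Measure.map_snd_prod]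
      simp [measure_univ]
    have h2 : ν s = ∫⁻ y, κ₂ y s ∂η := by
      rw [← hl2s, Measure.map_apply measurable_snd hs, ← hdis₂,
        Measure.compProd_apply (measurable_snd hs)]
      rfl
    rw [h2]
    exact lintegral_congr h1
  · -- invariance
    intro g
    have hT : Measurable (fun x : X => g • x) := (hact g).measurable
    have hTT : Measurable (fun p : X × X => (g • p.1, g • p.2)) :=
      (hT.comp measurable_fst).prodMk (hT.comp measurable_snd)
    ext s hs
    rw [Measure.map_apply hTT hs, hbind _ (hTT hs), hbind _ hs]
    have heq1 := aux_equivariant' hact hη hρ₁fst hρ₁inv g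
    have heq2 := aux_equivariant' hact hη hl2fst hl2i g
    have hae : ∀ᵐ y ∂η, K y ((fun p : X × X => (g • p.1, g • p.2)) ⁻¹' s) = K (g • y) s := by
      filter_upwards [heq1, heq2] with y h1 h2
      rw [hKapp, hKapp, h1, h2]
      have : (fun p : X × X => (g • p.1, g • p.2)) = Prod.map (fun x : X => g • x)
        (fun x : X => g • x) := rfl
      rw [this, ← Measure.map_apply (hT.prodMap hT) hs,
        ← Measure.map_prod_map _ _ hT hT]
    rw [lintegral_congr_ae hae]
    have hmeas : Measurable fun y => K y s := K.measurable_coe hs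
    have : ∫⁻ y, K (g • y) s ∂η = ∫⁻ y, K y s ∂(η.map (fun x : X => g • x)) :=
      (lintegral_map hmeas hT).symm
    rw [this, hη g]
  · -- the integral inequality
    have he : Measurable (fun p : X × X => edist p.1 p.2) := continuous_edist.measurable
    have hofReal : ∀ (m : Measure (X × X)), IsProbabilityMeasure m →
        ∫⁻ p, edist p.1 p.2 ∂m = ENNReal.ofReal (∫ p, dist p.1 p.2 ∂m) := by
      intro m hm
      haveI := hm
      have hdistc : Continuous (fun p : X × X => dist p.1 p.2) :=
        continuous_dist.comp (continuous_fst.prodMk continuous_snd)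
      have hint : Integrable (fun p : X × X => dist p.1 p.2) m :=
        (BoundedContinuousFunction.mkOfCompact ⟨_, hdistc⟩).integrable m
      simp_rw [edist_dist]
      exact (ofReal_integral_eq_lintegral_ofReal hint
        (Filter.Eventually.of_forall fun p => dist_nonneg)).symm
    have he2 : Measurable fun q : X × X => edist q.2 q.1 :=
      (Continuous.edist continuous_snd continuous_fst).measurable
    have hA : Measurable fun y => ∫⁻ a, edist a y ∂κ₁ y := by
      exact Measurable.lintegral_kernel_prod_right' (f := fun q : X × X => edist q.2 q.1) he2
    have hB : Measurable fun y => ∫⁻ b, edist y b ∂κ₂ y := by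
      exact Measurable.lintegral_kernel_prod_right' (f := fun q : X × X => edist q.1 q.2) he
    have hinner : ∀ y, ∫⁻ p, edist p.1 p.2 ∂(K y)
        ≤ (∫⁻ a, edist a y ∂κ₁ y) + ∫⁻ b, edist y b ∂κ₂ y := by
      intro y
      rw [hKapp, lintegral_prod _ he.aemeasurable]
      have step1 : ∫⁻ a, ∫⁻ b, edist a b ∂κ₂ y ∂κ₁ y
          ≤ ∫⁻ a, ∫⁻ b, (edist a y + edist y b) ∂κ₂ y ∂κ₁ y := by
        refine lintegral_mono fun a => lintegral_mono fun b => edist_triangle a y b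
      have step2 : ∀ a : X, ∫⁻ b, (edist a y + edist y b) ∂κ₂ y
          = edist a y + ∫⁻ b, edist y b ∂κ₂ y := by
        intro a
        rw [lintegral_add_left measurable_const, lintegral_const, measure_univ, mul_one]
      have step3 : ∫⁻ a, (edist a y + ∫⁻ b, edist y b ∂κ₂ y) ∂κ₁ y
          = (∫⁻ a, edist a y ∂κ₁ y) + ∫⁻ b, edist y b ∂κ₂ y := by
        rw [lintegral_add_right _ measurable_const, lintegral_const, measure_univ, mul_one]
      calc ∫⁻ a, ∫⁻ b, edist a b ∂κ₂ y ∂κ₁ y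
          ≤ ∫⁻ a, ∫⁻ b, (edist a y + edist y b) ∂κ₂ y ∂κ₁ y := step1
        _ = ∫⁻ a, (edist a y + ∫⁻ b, edist y b ∂κ₂ y) ∂κ₁ y := lintegral_congr step2
        _ = (∫⁻ a, edist a y ∂κ₁ y) + ∫⁻ b, edist y b ∂κ₂ y := step3
    have hlamlint : ∫⁻ p, edist p.1 p.2 ∂lam
        ≤ (∫⁻ p, edist p.1 p.2 ∂lam₁) + ∫⁻ p, edist p.1 p.2 ∂lam₂ := by
      have h0 : ∫⁻ p, edist p.1 p.2 ∂lam = ∫⁻ y, ∫⁻ p, edist p.1 p.2 ∂(K y) ∂η := by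
        rw [hlamdef]
        exact Measure.lintegral_bind K.measurable.aemeasurable he.aemeasurable
      have h1 : ∫⁻ y, ∫⁻ a, edist a y ∂κ₁ y ∂η = ∫⁻ p, edist p.1 p.2 ∂lam₁ := by
        have := Measure.lintegral_compProd (μ := η) (κ := κ₁)
          (f := fun q : X × X => edist q.2 q.1) he2
        rw [hdis₁, hρ₁def] at this
        rw [← this, lintegral_map he2 measurable_swap]
        rfl
      have h2 : ∫⁻ y, ∫⁻ b, edist y b ∂κ₂ y ∂η = ∫⁻ p, edist p.1 p.2 ∂lam₂ := by
        have := Measure.lintegral_compProd (μ := η) (κ := κ₂)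
          (f := fun q : X × X => edist q.1 q.2) he
        rw [hdis₂] at this
        rw [← this]
      calc ∫⁻ p, edist p.1 p.2 ∂lam
          = ∫⁻ y, ∫⁻ p, edist p.1 p.2 ∂(K y) ∂η := h0
        _ ≤ ∫⁻ y, ((∫⁻ a, edist a y ∂κ₁ y) + ∫⁻ b, edist y b ∂κ₂ y) ∂η :=
            lintegral_mono hinner
        _ = (∫⁻ y, ∫⁻ a, edist a y ∂κ₁ y ∂η) + ∫⁻ y, ∫⁻ b, edist y b ∂κ₂ y ∂η :=
            lintegral_add_left hA _
        _ = (∫⁻ p, edist p.1 p.2 ∂lam₁) + ∫⁻ p, edist p.1 p.2 ∂lam₂ := by rw [h1, h2]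
    have hnn1 : (0:ℝ) ≤ ∫ p, dist p.1 p.2 ∂lam₁ := integral_nonneg fun p => dist_nonneg
    have hnn2 : (0:ℝ) ≤ ∫ p, dist p.1 p.2 ∂lam₂ := integral_nonneg fun p => dist_nonneg
    rw [hofReal lam hlamp, hofReal lam₁ hl1p, hofReal lam₂ hl2p,
      ← ENNReal.ofReal_add hnn1 hnn2] at hlamlint
    exact (ENNReal.ofReal_le_ofReal_iff (by linarith)).mp hlamlint



end AuxRho

/-- `ρ̄` is a metric on `M_G(X)`: nonnegative, symmetric, triangle inequality,
and vanishing exactly on the diagonal. -/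
theorem stmt3 {G : Type*} [Group G] [Countable G] [DecidableEq G]
    {X : Type*} [MetricSpace X] [CompactSpace X] [MeasurableSpace X] [BorelSpace X]
    [MulAction G X] (hact : ∀ g : G, Continuous fun x : X => g • x) :
    ∀ μ ν η : Measure X, IsProbabilityMeasure μ → IsProbabilityMeasure ν →
      IsProbabilityMeasure η → IsInvariantMeasure G X μ → IsInvariantMeasure G X ν →
      IsInvariantMeasure G X η →
      0 ≤ rhoBar G X μ ν ∧
      rhoBar G X μ ν = rhoBar G X ν μ ∧
      rhoBar G X μ ν ≤ rhoBar G X μ η + rhoBar G X η ν ∧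
      (rhoBar G X μ ν = 0 ↔ μ = ν) := by
  intro μ ν η hμp hνp hηp hμ hν hη
  refine ⟨?_, aux_symm hact, ?_, ?_, ?_⟩
  · exact le_csInf (aux_set_nonempty hact hμp hνp hμ hν) fun r hr => aux_nonneg hr
  · -- triangle inequality
    have hS1 := aux_set_nonempty hact hμp hηp hμ hη
    have hS2 := aux_set_nonempty hact hηp hνp hη hν
    have key : ∀ a ∈ {r : ℝ | ∃ lam : Measure (X × X), IsJoining G X lam μ η ∧
          r = ∫ p, dist p.1 p.2 ∂lam},
        ∀ b ∈ {r : ℝ | ∃ lam : Measure (X × X), IsJoining G X lam η ν ∧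
          r = ∫ p, dist p.1 p.2 ∂lam}, rhoBar G X μ ν ≤ a + b := by
      rintro a ⟨l1, hj1, rfl⟩ b ⟨l2, hj2, rfl⟩
      obtain ⟨lam, hj, hle⟩ := aux_compose hact hμp hηp hνp hη hj1 hj2
      exact le_trans (csInf_le aux_bdd ⟨lam, hj, rfl⟩) hle
    have h2 : ∀ a ∈ {r : ℝ | ∃ lam : Measure (X × X), IsJoining G X lam μ η ∧
          r = ∫ p, dist p.1 p.2 ∂lam},
        rhoBar G X μ ν - a ≤ rhoBar G X η ν := fun a ha =>
      le_csInf hS2 fun b hb => by linarith [key a ha b hb]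
    have h3 : rhoBar G X μ ν - rhoBar G X η ν ≤ rhoBar G X μ η :=
      le_csInf hS1 fun a ha => by linarith [h2 a ha]
    linarith
  · intro h0
    exact aux_eq_of_rhoBar_zero hact hμp hνp hμ hν
      (aux_set_nonempty hact hμp hνp hμ hν) h0
  · rintro rfl
    exact aux_rhoBar_self hact hμp hμ
end

section
/- Let μ, ν ∈ M_G(X) be ergodic and let F = (F_n) be any Følner sequence in G. Then for all x ∈ Gen_F(μ) and z ∈ Gen_F(ν) one has liminf_{N→∞} (1/|F_N|) Σ_{g ∈ F_N} d(g·x, g·z) ≥ ρ̄(μ,ν). -/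
open MeasureTheory Filter Topology Pointwise

section RieszLite

open Set TopologicalSpace
open scoped ENNReal NNReal

variable {K : Type*} [MetricSpace K] [CompactSpace K] [MeasurableSpace K] [BorelSpace K]

/-- A positive normalized linear functional on `C(K, ℝ)`. -/
structure RLPos (Lam : C(K, ℝ) → ℝ) : Prop where
  add : ∀ f g : C(K, ℝ), Lam (f + g) = Lam f + Lam g
  smul : ∀ (c : ℝ) (f : C(K, ℝ)), Lam (c • f) = c * Lam f
  mono : ∀ f g : C(K, ℝ), (∀ w, f w ≤ g w) → Lam f ≤ Lam g
  one : Lam 1 = 1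

namespace RLPos

variable {Lam : C(K, ℝ) → ℝ}

omit [CompactSpace K] [MeasurableSpace K] [BorelSpace K]

theorem zero (hL : RLPos Lam) : Lam 0 = 0 := by
  have := hL.add 0 0
  simp only [add_zero] at this
  linarith

theorem nonneg (hL : RLPos Lam) {f : C(K, ℝ)} (hf : ∀ w, 0 ≤ f w) : 0 ≤ Lam f := by
  have := hL.mono 0 f (by simpa using hf)
  rwa [hL.zero] at this

theorem sum (hL : RLPos Lam) {ι : Type*} (s : Finset ι) (f : ι → C(K, ℝ)) :
    Lam (∑ i ∈ s, f i) = ∑ i ∈ s, Lam (f i) := by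
  classical
  induction s using Finset.induction_on with
  | empty => simpa using hL.zero
  | insert a s hni ih => rw [Finset.sum_insert hni, Finset.sum_insert hni, hL.add, ih]

end RLPos

/-- Test functions for the Riesz content of a set. -/
def RLtest (C : Set K) : Set C(K, ℝ) :=
  {f | (∀ w ∈ C, 1 ≤ f w) ∧ ∀ w, 0 ≤ f w}

omit [CompactSpace K] [MeasurableSpace K] [BorelSpace K] in
theorem RLtest.one_mem (C : Set K) : (1 : C(K, ℝ)) ∈ RLtest C :=
  ⟨fun _ _ => le_refl _, fun _ => zero_le_one⟩

/-- The Riesz content of a set. -/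
noncomputable def RLrc (Lam : C(K, ℝ) → ℝ) (C : Set K) : ℝ :=
  sInf (Lam '' RLtest C)

section rc

variable {Lam : C(K, ℝ) → ℝ}

omit [CompactSpace K] [MeasurableSpace K] [BorelSpace K]

theorem RLrc_bddBelow (hL : RLPos Lam) (C : Set K) : BddBelow (Lam '' RLtest C) := by
  refine ⟨0, fun r hr => ?_⟩
  obtain ⟨f, hf, rfl⟩ := hr
  exact hL.nonneg hf.2

theorem RLrc_le (hL : RLPos Lam) {C : Set K} {f : C(K, ℝ)} (hf : f ∈ RLtest C) :
    RLrc Lam C ≤ Lam f :=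
  csInf_le (RLrc_bddBelow hL C) ⟨f, hf, rfl⟩

theorem le_RLrc {C : Set K} {r : ℝ} (h : ∀ f ∈ RLtest C, r ≤ Lam f) : r ≤ RLrc Lam C :=
  le_csInf ⟨Lam 1, 1, RLtest.one_mem C, rfl⟩ (by rintro b ⟨f, hf, rfl⟩; exact h f hf)

theorem RLrc_nonneg (hL : RLPos Lam) (C : Set K) : 0 ≤ RLrc Lam C :=
  le_RLrc fun f hf => hL.nonneg hf.2

theorem RLrc_mono (hL : RLPos Lam) {C D : Set K} (h : C ⊆ D) : RLrc Lam C ≤ RLrc Lam D :=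
  csInf_le_csInf (RLrc_bddBelow hL C) ⟨Lam 1, 1, RLtest.one_mem D, rfl⟩
    (Set.image_mono fun f hf => ⟨fun w hw => hf.1 w (h hw), hf.2⟩)

theorem exists_RLtest_lt {C : Set K} {ε : ℝ} (hε : 0 < ε) :
    ∃ f ∈ RLtest C, Lam f < RLrc Lam C + ε := by
  obtain ⟨r, hr, hrlt⟩ := Real.lt_sInf_add_pos (⟨Lam 1, 1, RLtest.one_mem C, rfl⟩ :
    (Lam '' RLtest C).Nonempty) hε
  obtain ⟨f, hf, rfl⟩ := hr
  exact ⟨f, hf, hrlt⟩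

theorem RLrc_union_le (hL : RLPos Lam) (C D : Set K) :
    RLrc Lam (C ∪ D) ≤ RLrc Lam C + RLrc Lam D := by
  refine le_of_forall_pos_le_add fun ε hε => ?_
  obtain ⟨f, hf, hfe⟩ := exists_RLtest_lt (Lam := Lam) (C := C) (half_pos hε)
  obtain ⟨g, hg, hge⟩ := exists_RLtest_lt (Lam := Lam) (C := D) (half_pos hε)
  have hmem : f + g ∈ RLtest (C ∪ D) := by
    constructor
    · rintro w (hw | hw)
      · exact le_add_of_le_of_nonneg (hf.1 w hw) (hg.2 w)
      · exact le_add_of_nonneg_of_le (hf.2 w) (hg.1 w hw)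
    · intro w; exact add_nonneg (hf.2 w) (hg.2 w)
  calc RLrc Lam (C ∪ D) ≤ Lam (f + g) := RLrc_le hL hmem
    _ = Lam f + Lam g := hL.add f g
    _ ≤ RLrc Lam C + ε / 2 + (RLrc Lam D + ε / 2) := by
        have h1 := le_of_lt hfe
        have h2 := le_of_lt hge
        exact add_le_add h1 h2
    _ = RLrc Lam C + RLrc Lam D + ε := by ring

theorem le_RLrc_union (hL : RLPos Lam) {C D : Set K} (hC : IsClosed C) (hD : IsClosed D)
    (hdisj : Disjoint C D) : RLrc Lam C + RLrc Lam D ≤ RLrc Lam (C ∪ D) := by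
  obtain ⟨u, hu0, hu1, hu01⟩ := exists_continuous_zero_one_of_isClosed hC hD hdisj
  refine le_RLrc fun f hf => ?_
  have h1 : f * (1 - u) ∈ RLtest C := by
    constructor
    · intro w hw
      have : u w = 0 := hu0 hw
      simpa [this] using hf.1 w (Or.inl hw)
    · intro w
      have := (hu01 w).2
      simp only [ContinuousMap.mul_apply, ContinuousMap.sub_apply, ContinuousMap.one_apply]
      exact mul_nonneg (hf.2 w) (by linarith)
  have h2 : f * u ∈ RLtest D := by
    constructor
    · intro w hw
      have : u w = 1 := hu1 hw
      simpa [this] using hf.1 w (Or.inr hw)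
    · intro w; exact mul_nonneg (hf.2 w) (hu01 w).1
  have key : Lam (f * (1 - u)) + Lam (f * u) = Lam f := by
    rw [← hL.add]
    congr 1
    ring
  calc RLrc Lam C + RLrc Lam D ≤ Lam (f * (1 - u)) + Lam (f * u) :=
        add_le_add (RLrc_le hL h1) (RLrc_le hL h2)
    _ = Lam f := key

end rc

/-- The content associated to a positive normalized functional. -/
noncomputable def RLcontent {Lam : C(K, ℝ) → ℝ} (hL : RLPos Lam) : Content K where
  toFun C := Real.toNNReal (RLrc Lam C.1)
  mono' K₁ K₂ h := Real.toNNReal_mono (RLrc_mono hL h)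
  sup_disjoint' K₁ K₂ hdisj h₁ h₂ := by
    have hcoe : (K₁ ⊔ K₂ : Compacts K).carrier = K₁.carrier ∪ K₂.carrier := rfl
    have h5 : RLrc Lam (K₁ ⊔ K₂ : Compacts K).carrier = RLrc Lam K₁.carrier + RLrc Lam K₂.carrier := by
      rw [hcoe]
      exact le_antisymm (RLrc_union_le hL _ _) (le_RLrc_union hL h₁ h₂ hdisj)
    rw [h5, Real.toNNReal_add (RLrc_nonneg hL _) (RLrc_nonneg hL _)]
  sup_le' K₁ K₂ := by
    have hcoe : (K₁ ⊔ K₂ : Compacts K).carrier = K₁.carrier ∪ K₂.carrier := rfl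
    calc Real.toNNReal (RLrc Lam (K₁ ⊔ K₂ : Compacts K).carrier)
        ≤ Real.toNNReal (RLrc Lam K₁.carrier + RLrc Lam K₂.carrier) := by
          rw [hcoe]; exact Real.toNNReal_mono (RLrc_union_le hL _ _)
      _ = Real.toNNReal (RLrc Lam K₁.1) + Real.toNNReal (RLrc Lam K₂.1) :=
          Real.toNNReal_add (RLrc_nonneg hL _) (RLrc_nonneg hL _)

/-- The measure associated to a positive normalized functional on `C(K, ℝ)`. -/
noncomputable def RLmeasure {Lam : C(K, ℝ) → ℝ} (hL : RLPos Lam) : Measure K :=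
  (RLcontent hL).measure

section measure

variable {Lam : C(K, ℝ) → ℝ}

theorem RLmeasure_le (hL : RLPos Lam) {C : Set K} (hC : IsClosed C) {f : C(K, ℝ)}
    (hf : f ∈ RLtest C) :
    RLmeasure hL C ≤ ENNReal.ofReal (Lam f) := by
  have hf0 : 0 ≤ Lam f := hL.nonneg hf.2
  have main : ∀ c : ℝ, 1 < c → RLmeasure hL C ≤ ENNReal.ofReal (c * Lam f) := by
    intro c hc
    have hc0 : 0 < c := lt_trans one_pos hc
    set U : Set K := {w | c⁻¹ < f w} with hU
    have hUopen : IsOpen U := isOpen_lt continuous_const f.continuous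
    have hCU : C ⊆ U := fun w hw =>
      lt_of_lt_of_le (by rw [inv_lt_one_iff₀]; right; exact hc) (hf.1 w hw)
    have h1 : RLmeasure hL C ≤ RLmeasure hL U := measure_mono hCU
    have h2 : RLmeasure hL U = (RLcontent hL).innerContent ⟨U, hUopen⟩ := by
      rw [RLmeasure, Content.measure_apply _ hUopen.measurableSet,
        Content.outerMeasure_of_isOpen _ _ hUopen]
    refine h1.trans (h2.trans_le ?_)
    rw [Content.innerContent]
    refine iSup₂_le fun K' hK' => ?_
    have hmem : c • f ∈ RLtest (K' : Set K) := by
      constructor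
      · intro w hw
        have h3 : c⁻¹ < f w := hK' hw
        have h4 := mul_lt_mul_of_pos_left h3 hc0
        rw [mul_inv_cancel₀ (ne_of_gt hc0)] at h4
        simpa using h4.le
      · intro w; simpa using mul_nonneg hc0.le (hf.2 w)
    have hkey : RLrc Lam (K' : Set K) ≤ c * Lam f := by
      have := RLrc_le hL hmem
      rwa [hL.smul] at this
    calc ((RLcontent hL) K' : ℝ≥0∞) = ENNReal.ofReal (RLrc Lam (K' : Set K)) := rfl
      _ ≤ ENNReal.ofReal (c * Lam f) := ENNReal.ofReal_le_ofReal hkey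
  refine ENNReal.le_of_forall_pos_le_add fun ε hε _ => ?_
  have hεr : (0:ℝ) < (ε : ℝ) := hε
  set c : ℝ := 1 + (ε : ℝ) / (Lam f + 1) with hcdef
  have hc : 1 < c := by
    have : (0:ℝ) < (ε : ℝ) / (Lam f + 1) := div_pos hεr (by linarith)
    simp only [hcdef]
    linarith
  have hle : c * Lam f ≤ Lam f + (ε : ℝ) := by
    have h1 : Lam f / (Lam f + 1) ≤ 1 := by
      rw [div_le_one (by linarith)]; linarith
    have h2 : c * Lam f = Lam f + (ε : ℝ) * (Lam f / (Lam f + 1)) := by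
      have hne : Lam f + 1 ≠ 0 := by linarith
      rw [hcdef]; field_simp
    rw [h2]
    have := mul_le_mul_of_nonneg_left h1 hεr.le
    linarith
  calc RLmeasure hL C ≤ ENNReal.ofReal (c * Lam f) := main c hc
    _ ≤ ENNReal.ofReal (Lam f + (ε : ℝ)) := ENNReal.ofReal_le_ofReal hle
    _ = ENNReal.ofReal (Lam f) + ENNReal.ofReal (ε : ℝ) := ENNReal.ofReal_add hf0 hεr.le
    _ = ENNReal.ofReal (Lam f) + (ε : ℝ≥0∞) := by rw [ENNReal.ofReal_coe_nnreal]

theorem le_RLmeasure (hL : RLPos Lam) {D : Set K} (hD : IsClosed D) {f : C(K, ℝ)}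
    (h0 : ∀ w, 0 ≤ f w) (h1 : ∀ w, f w ≤ 1) (hsupp : ∀ w ∉ D, f w = 0) :
    ENNReal.ofReal (Lam f) ≤ RLmeasure hL D := by
  have hcpt : IsCompact D := hD.isCompact
  have key : Lam f ≤ RLrc Lam D := by
    refine le_csInf ⟨Lam 1, 1, RLtest.one_mem D, rfl⟩ ?_
    rintro b ⟨g, hg, rfl⟩
    refine hL.mono f g fun w => ?_
    by_cases hw : w ∈ D
    · exact (h1 w).trans (hg.1 w hw)
    · rw [hsupp w hw]; exact hg.2 w
  calc ENNReal.ofReal (Lam f) ≤ ENNReal.ofReal (RLrc Lam D) := ENNReal.ofReal_le_ofReal key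
    _ = ((RLcontent hL) ⟨D, hcpt⟩ : ℝ≥0∞) := rfl
    _ ≤ (RLcontent hL).outerMeasure D := Content.le_outerMeasure_compacts _ ⟨D, hcpt⟩
    _ = RLmeasure hL D := (Content.measure_apply _ hD.measurableSet).symm

theorem RLmeasure_univ (hL : RLPos Lam) : RLmeasure hL Set.univ = 1 := by
  refine le_antisymm ?_ ?_
  · have := RLmeasure_le hL isClosed_univ (RLtest.one_mem Set.univ)
    rwa [hL.one, ENNReal.ofReal_one] at this
  · have := le_RLmeasure hL isClosed_univ (f := 1) (fun _ => zero_le_one) (fun _ => le_refl _)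
      (fun w hw => absurd (Set.mem_univ w) hw)
    rwa [hL.one, ENNReal.ofReal_one] at this

instance RLprob {Lam : C(K, ℝ) → ℝ} (hL : RLPos Lam) : IsProbabilityMeasure (RLmeasure hL) :=
  ⟨RLmeasure_univ hL⟩

end measure

end RieszLite
section RieszLite2

open Set TopologicalSpace Metric
open scoped ENNReal NNReal

/-- Continuous approximations from outside to the indicator of a set. -/
noncomputable def RLcap {Y : Type*} [MetricSpace Y] (C : Set Y) (n : ℕ) : C(Y, ℝ) :=
  ⟨fun y => max 0 (1 - ((n : ℝ) + 1) * Metric.infDist y C),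
    continuous_const.max (continuous_const.sub
      (continuous_const.mul (Metric.continuous_infDist_pt C)))⟩

/-- The `1/(n+1)`-neighborhood of a set. -/
def RLD {Y : Type*} [MetricSpace Y] (C : Set Y) (n : ℕ) : Set Y :=
  {y | Metric.infDist y C ≤ 1 / ((n : ℝ) + 1)}

namespace RLD

variable {Y : Type*} [MetricSpace Y] (C : Set Y)

theorem closed (n : ℕ) : IsClosed (RLD C n) :=
  isClosed_le (Metric.continuous_infDist_pt C) continuous_const

theorem antitone : Antitone (RLD C) := by
  intro a b hab y hy
  simp only [RLD, Set.mem_setOf_eq] at hy ⊢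
  refine le_trans hy ?_
  refine one_div_le_one_div_of_le (by positivity) ?_
  exact_mod_cast add_le_add_left (Nat.cast_le.mpr hab) 1

theorem iInter_eq {C : Set Y} (hC : IsClosed C) (hne : C.Nonempty) : ⋂ n, RLD C n = C := by
  ext y
  simp only [Set.mem_iInter]
  constructor
  · intro h
    have hz : Metric.infDist y C = 0 := by
      by_contra hpos
      have h0 : 0 < Metric.infDist y C := lt_of_le_of_ne Metric.infDist_nonneg (Ne.symm hpos)
      obtain ⟨n, hn⟩ := exists_nat_one_div_lt h0
      exact absurd (h n) (not_le.mpr hn)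
    have : y ∈ closure C := (Metric.mem_closure_iff_infDist_zero hne).mpr hz
    rwa [hC.closure_eq] at this
  · intro hy n
    have : Metric.infDist y C = 0 := Metric.infDist_zero_of_mem hy
    rw [RLD, Set.mem_setOf_eq, this]
    positivity

end RLD

namespace RLcap

variable {Y : Type*} [MetricSpace Y] (C : Set Y) (n : ℕ)

theorem nonneg (y : Y) : 0 ≤ RLcap C n y := le_max_left _ _

theorem le_one (y : Y) : RLcap C n y ≤ 1 := by
  refine max_le zero_le_one ?_
  have : 0 ≤ ((n : ℝ) + 1) * Metric.infDist y C := by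
    have := Metric.infDist_nonneg (x := y) (s := C)
    positivity
  linarith

theorem eq_one {y : Y} (hy : y ∈ C) : RLcap C n y = 1 := by
  have : Metric.infDist y C = 0 := Metric.infDist_zero_of_mem hy
  simp [RLcap, this]

theorem eq_zero {y : Y} (hy : y ∉ RLD C n) : RLcap C n y = 0 := by
  have h1 : 1 / ((n : ℝ) + 1) < Metric.infDist y C := not_le.mp hy
  have h2 : 1 < ((n : ℝ) + 1) * Metric.infDist y C := by
    rw [div_lt_iff₀ (by positivity)] at h1
    linarith [h1]
  exact max_eq_left (by linarith)

theorem indicator_le (y : Y) : C.indicator (fun _ => (1 : ℝ)) y ≤ RLcap C n y := by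
  by_cases hy : y ∈ C
  · rw [Set.indicator_of_mem hy, eq_one C n hy]
  · rw [Set.indicator_of_notMem hy]; exact nonneg C n y

theorem tendsto_indicator {C : Set Y} (hC : IsClosed C) (hne : C.Nonempty) (y : Y) :
    Filter.Tendsto (fun n => RLcap C n y) Filter.atTop
      (nhds (C.indicator (fun _ => (1 : ℝ)) y)) := by
  by_cases hy : y ∈ C
  · rw [Set.indicator_of_mem hy]
    exact Filter.Tendsto.congr (fun n => (eq_one C n hy).symm) tendsto_const_nhds
  · rw [Set.indicator_of_notMem hy]
    have h0 : 0 < Metric.infDist y C := by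
      rcases lt_or_eq_of_le (Metric.infDist_nonneg (x := y) (s := C)) with h | h
      · exact h
      · exfalso
        have : y ∈ closure C := (Metric.mem_closure_iff_infDist_zero hne).mpr h.symm
        rw [hC.closure_eq] at this
        exact hy this
    obtain ⟨N, hN⟩ := exists_nat_one_div_lt h0
    have hev : ∀ᶠ n in Filter.atTop, RLcap C n y = 0 := by
      rw [Filter.eventually_atTop]
      refine ⟨N, fun n hn => eq_zero C n ?_⟩
      intro hmem
      have h2 : 1 / ((n : ℝ) + 1) ≤ 1 / ((N : ℝ) + 1) := by
        refine one_div_le_one_div_of_le (by positivity) ?_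
        exact_mod_cast add_le_add_left (Nat.cast_le.mpr hn) 1
      have h3 : Metric.infDist y C ≤ 1 / ((N : ℝ) + 1) := le_trans hmem h2
      exact absurd h3 (not_le.mpr hN)
    have hev' : (fun n => RLcap C n y) =ᶠ[Filter.atTop] fun _ => (0 : ℝ) := hev
    exact Filter.Tendsto.congr' hev'.symm tendsto_const_nhds

end RLcap

end RieszLite2
section RieszLite3

open Set TopologicalSpace Metric MeasureTheory Filter
open scoped ENNReal NNReal

variable {K : Type*} [MetricSpace K] [CompactSpace K] [MeasurableSpace K] [BorelSpace K]
variable {Lam : C(K, ℝ) → ℝ}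

/-- Two Borel probability measures on a metric space agreeing on closed sets are equal. -/
theorem RLext_closed {p q : Measure K} [IsProbabilityMeasure p] [IsProbabilityMeasure q]
    (h : ∀ C : Set K, IsClosed C → p C = q C) : p = q := by
  have hgen : (inferInstance : MeasurableSpace K) =
      MeasurableSpace.generateFrom {s : Set K | IsClosed s} := by
    rw [BorelSpace.measurable_eq (α := K), borel_eq_generateFrom_isClosed]
  refine ext_of_generate_finite _ hgen ?_ (fun s hs => h s hs) ?_
  · rintro s hs t ht -
    exact IsClosed.inter hs ht
  · simp [measure_univ]

theorem RLcap_integrable (q : Measure K) [IsProbabilityMeasure q] (C : Set K) (n : ℕ) :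
    Integrable (fun y => RLcap C n y) q :=
  (RLcap C n).continuous.integrable_of_hasCompactSupport (isClosed_tsupport _).isCompact

theorem RLcap_tendsto_integral (q : Measure K) [IsProbabilityMeasure q] {C : Set K}
    (hC : IsClosed C) (hne : C.Nonempty) :
    Tendsto (fun n => ∫ y, RLcap C n y ∂q) atTop (nhds ((q C).toReal)) := by
  have h := tendsto_integral_of_dominated_convergence (μ := q)
    (F := fun n y => RLcap C n y) (f := C.indicator fun _ => (1 : ℝ)) (bound := fun _ => 1)
    (fun n => ((RLcap C n).continuous.aestronglyMeasurable))
    (integrable_const 1)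
    (fun n => Filter.Eventually.of_forall fun y => by
      rw [Real.norm_eq_abs, abs_of_nonneg (RLcap.nonneg C n y)]
      exact RLcap.le_one C n y)
    (Filter.Eventually.of_forall fun y => RLcap.tendsto_indicator hC hne y)
  rwa [integral_indicator_const (1 : ℝ) hC.measurableSet, smul_eq_mul, mul_one] at h

theorem RLtoReal_le_integral_cap (q : Measure K) [IsProbabilityMeasure q] {C : Set K}
    (hC : IsClosed C) (n : ℕ) : (q C).toReal ≤ ∫ y, RLcap C n y ∂q := by
  have h1 : ∫ y, C.indicator (fun _ => (1:ℝ)) y ∂q ≤ ∫ y, RLcap C n y ∂q :=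
    integral_mono ((integrable_const (1:ℝ)).indicator hC.measurableSet)
      (RLcap_integrable q C n) (RLcap.indicator_le C n)
  rwa [integral_indicator_const (1 : ℝ) hC.measurableSet, smul_eq_mul, mul_one] at h1

/-- If `Lam` integrates test functions against a measure `q` through a map `π`, then the
pushforward of the Riesz measure under `π` is `q`. -/
theorem RLmap_eq (hL : RLPos Lam) {Y : Type*} [MetricSpace Y] [CompactSpace Y]
    [MeasurableSpace Y] [BorelSpace Y] (π : C(K, Y)) (q : Measure Y) [IsProbabilityMeasure q]
    (hq : ∀ ψ : C(Y, ℝ), Lam (ψ.comp π) = ∫ y, ψ y ∂q) :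
    (RLmeasure hL).map π = q := by
  haveI := RLprob hL
  have hπm : Measurable π := π.continuous.measurable
  haveI : IsProbabilityMeasure ((RLmeasure hL).map π) :=
    Measure.isProbabilityMeasure_map hπm.aemeasurable
  refine RLext_closed fun C hC => ?_
  rw [Measure.map_apply hπm hC.measurableSet]
  rcases C.eq_empty_or_nonempty with rfl | hne
  · simp
  have hupper : RLmeasure hL (π ⁻¹' C) ≤ q C := by
    have hle : ∀ n, RLmeasure hL (π ⁻¹' C) ≤ ENNReal.ofReal (∫ y, RLcap C n y ∂q) := by
      intro n
      have htest : (RLcap C n).comp π ∈ RLtest (π ⁻¹' C) :=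
        ⟨fun w hw => (RLcap.eq_one C n hw).ge, fun w => RLcap.nonneg C n (π w)⟩
      have h1 := RLmeasure_le hL (hC.preimage π.continuous) htest
      rwa [hq] at h1
    have h2 : Tendsto (fun n => ENNReal.ofReal (∫ y, RLcap C n y ∂q)) atTop
        (nhds (ENNReal.ofReal ((q C).toReal))) :=
      (ENNReal.continuous_ofReal.tendsto _).comp (RLcap_tendsto_integral q hC hne)
    rw [ENNReal.ofReal_toReal (measure_ne_top q C)] at h2
    exact ge_of_tendsto' h2 hle
  have hlower : q C ≤ RLmeasure hL (π ⁻¹' C) := by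
    have hle : ∀ n, q C ≤ RLmeasure hL (π ⁻¹' RLD C n) := by
      intro n
      have h1 : ENNReal.ofReal (Lam ((RLcap C n).comp π)) ≤ RLmeasure hL (π ⁻¹' RLD C n) :=
        le_RLmeasure hL ((RLD.closed C n).preimage π.continuous)
          (fun w => RLcap.nonneg C n (π w)) (fun w => RLcap.le_one C n (π w))
          (fun w hw => RLcap.eq_zero C n hw)
      calc q C = ENNReal.ofReal ((q C).toReal) := (ENNReal.ofReal_toReal (measure_ne_top q C)).symm
        _ ≤ ENNReal.ofReal (∫ y, RLcap C n y ∂q) :=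
            ENNReal.ofReal_le_ofReal (RLtoReal_le_integral_cap q hC n)
        _ = ENNReal.ofReal (Lam ((RLcap C n).comp π)) := by rw [hq]
        _ ≤ _ := h1
    have hA : Antitone fun n => π ⁻¹' RLD C n := fun a b hab =>
      Set.preimage_mono (RLD.antitone C hab)
    have hiInf : RLmeasure hL (π ⁻¹' C) = ⨅ n, RLmeasure hL (π ⁻¹' RLD C n) := by
      have h3 := hA.measure_iInter (μ := RLmeasure hL)
        (fun n => (((RLD.closed C n).preimage π.continuous).measurableSet).nullMeasurableSet)
        ⟨0, measure_ne_top _ _⟩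
      rw [← Set.preimage_iInter, RLD.iInter_eq hC hne] at h3
      exact h3
    rw [hiInf]
    exact le_iInf hle
  exact le_antisymm hupper hlower

/-- If `Lam` is invariant under composition with a bi-continuous bijection `T`, then the
Riesz measure is `T`-invariant. -/
theorem RLmap_self (hL : RLPos Lam) (T S : C(K, K)) (hTS : ∀ w, T (S w) = w)
    (hT : ∀ ψ : C(K, ℝ), Lam (ψ.comp T) = Lam ψ)
    (hS : ∀ ψ : C(K, ℝ), Lam (ψ.comp S) = Lam ψ) :
    (RLmeasure hL).map T = RLmeasure hL := by
  haveI := RLprob hL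
  have core : ∀ R : C(K, K), (∀ ψ : C(K, ℝ), Lam (ψ.comp R) = Lam ψ) →
      ∀ C : Set K, IsClosed C → RLmeasure hL C ≤ RLmeasure hL (R ⁻¹' C) := by
    intro R hR C hC
    rcases C.eq_empty_or_nonempty with rfl | hne
    · simp
    have hle : ∀ n, RLmeasure hL C ≤ RLmeasure hL (R ⁻¹' RLD C n) := by
      intro n
      have h1 : RLmeasure hL C ≤ ENNReal.ofReal (Lam (RLcap C n)) :=
        RLmeasure_le hL hC ⟨fun w hw => (RLcap.eq_one C n hw).ge, fun w => RLcap.nonneg C n w⟩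
      have h2 : ENNReal.ofReal (Lam ((RLcap C n).comp R)) ≤ RLmeasure hL (R ⁻¹' RLD C n) :=
        le_RLmeasure hL ((RLD.closed C n).preimage R.continuous)
          (fun w => RLcap.nonneg C n (R w)) (fun w => RLcap.le_one C n (R w))
          (fun w hw => RLcap.eq_zero C n hw)
      rw [hR] at h2
      exact h1.trans h2
    have hA : Antitone fun n => R ⁻¹' RLD C n := fun a b hab =>
      Set.preimage_mono (RLD.antitone C hab)
    have hiInf : RLmeasure hL (R ⁻¹' C) = ⨅ n, RLmeasure hL (R ⁻¹' RLD C n) := by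
      have h3 := hA.measure_iInter (μ := RLmeasure hL)
        (fun n => (((RLD.closed C n).preimage R.continuous).measurableSet).nullMeasurableSet)
        ⟨0, measure_ne_top _ _⟩
      rw [← Set.preimage_iInter, RLD.iInter_eq hC hne] at h3
      exact h3
    rw [hiInf]
    exact le_iInf hle
  haveI : IsProbabilityMeasure ((RLmeasure hL).map T) :=
    Measure.isProbabilityMeasure_map T.continuous.measurable.aemeasurable
  refine RLext_closed fun C hC => ?_
  rw [Measure.map_apply T.continuous.measurable hC.measurableSet]
  refine le_antisymm ?_ (core T hT C hC)
  have h1 := core S hS (T ⁻¹' C) (hC.preimage T.continuous)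
  have h2 : S ⁻¹' (T ⁻¹' C) = C := by
    ext w
    simp [Set.mem_preimage, hTS w]
  rwa [h2] at h1

end RieszLite3
section RieszLite4

open Set TopologicalSpace MeasureTheory Filter
open scoped ENNReal NNReal

variable {K : Type*} [MetricSpace K] [CompactSpace K] [MeasurableSpace K] [BorelSpace K]
variable {Lam : C(K, ℝ) → ℝ}

theorem RLintegral_le (hL : RLPos Lam) (f : C(K, ℝ)) (h0 : ∀ w, 0 ≤ f w) :
    ∫ w, f w ∂(RLmeasure hL) ≤ Lam f := by
  haveI := RLprob hL
  refine le_of_forall_pos_le_add fun ε hε => ?_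
  obtain ⟨n, hn⟩ := exists_nat_one_div_lt hε
  set m : ℝ := (n : ℝ) + 1 with hm
  have hm0 : (0 : ℝ) < m := by positivity
  set M : ℕ := ⌈‖f‖ * m⌉₊ with hM
  set Ci : ℕ → Set K := fun i => {w | ((i : ℝ) + 1) / m ≤ f w} with hCi
  have hCiclosed : ∀ i, IsClosed (Ci i) := fun i => isClosed_le continuous_const f.continuous
  set g : ℕ → C(K, ℝ) := fun i =>
    ⟨fun w => min 1 (max 0 (m * f w - (i : ℝ))),
      continuous_const.min (continuous_const.max
        ((continuous_const.mul f.continuous).sub continuous_const))⟩ with hgdef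
  -- pointwise upper bound on f by a simple function
  have step1 : ∀ w, f w ≤ 1 / m + ∑ i ∈ Finset.range M, (Ci i).indicator (fun _ => 1 / m) w := by
    intro w
    set j : ℕ := ⌊f w * m⌋₊ with hj
    have hfw0 : 0 ≤ f w := h0 w
    have hjle : (j : ℝ) ≤ f w * m := Nat.floor_le (by positivity)
    have hjM : j ≤ M := by
      have h1 : f w * m ≤ ‖f‖ * m :=
        mul_le_mul_of_nonneg_right ((le_abs_self _).trans (f.norm_coe_le_norm w)) hm0.le
      have h2 : (j : ℝ) ≤ (M : ℝ) := hjle.trans (h1.trans (Nat.le_ceil _))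
      exact_mod_cast h2
    have hmem : ∀ i ∈ Finset.range j, w ∈ Ci i := by
      intro i hi
      rw [Finset.mem_range] at hi
      show ((i : ℝ) + 1) / m ≤ f w
      rw [div_le_iff₀ hm0]
      have h3 : (i : ℝ) + 1 ≤ (j : ℝ) := by exact_mod_cast Nat.succ_le_of_lt hi
      linarith
    have hsum : (j : ℝ) * (1 / m) ≤
        ∑ i ∈ Finset.range M, (Ci i).indicator (fun _ => 1 / m) w := by
      have h1 : ∑ i ∈ Finset.range j, (Ci i).indicator (fun _ => 1 / m) w = (j : ℝ) * (1 / m) := by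
        rw [Finset.sum_congr rfl fun i hi => Set.indicator_of_mem (hmem i hi) _]
        simp [mul_comm]
      rw [← h1]
      refine Finset.sum_le_sum_of_subset_of_nonneg (Finset.range_subset_range.mpr hjM)
        fun i _ _ => Set.indicator_nonneg (fun _ _ => by positivity) w
    have hlt : f w < ((j : ℝ) + 1) / m := by
      rw [lt_div_iff₀ hm0]
      exact Nat.lt_floor_add_one (f w * m)
    calc f w ≤ ((j : ℝ) + 1) / m := hlt.le
      _ = 1 / m + (j : ℝ) * (1 / m) := by field_simp; ring
      _ ≤ 1 / m + ∑ i ∈ Finset.range M, (Ci i).indicator (fun _ => 1 / m) w := by linarith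
  have hfint : Integrable (fun w => f w) (RLmeasure hL) :=
    f.continuous.integrable_of_hasCompactSupport (isClosed_tsupport _).isCompact
  have hindint : ∀ i : ℕ, Integrable ((Ci i).indicator fun _ => 1 / m) (RLmeasure hL) :=
    fun i => (integrable_const _).indicator (hCiclosed i).measurableSet
  have hsumint : Integrable
      (fun w => ∑ i ∈ Finset.range M, (Ci i).indicator (fun _ => 1 / m) w) (RLmeasure hL) :=
    integrable_finset_sum _ fun i _ => hindint i
  have hint1 := integral_mono hfint ((integrable_const (1 / m)).add hsumint) step1
  have hint2 : ∫ w, (1 / m + ∑ i ∈ Finset.range M, (Ci i).indicator (fun _ => 1 / m) w)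
      ∂(RLmeasure hL) = 1 / m +
      ∑ i ∈ Finset.range M, ((RLmeasure hL) (Ci i)).toReal * (1 / m) := by
    rw [integral_add (integrable_const _) hsumint, integral_const,
      integral_finset_sum _ fun i _ => hindint i]
    congr 1
    · simp
    · refine Finset.sum_congr rfl fun i _ => ?_
      rw [integral_indicator_const _ (hCiclosed i).measurableSet, smul_eq_mul]
      rfl
  have hgtest : ∀ i : ℕ, g i ∈ RLtest (Ci i) := by
    intro i
    constructor
    · intro w hw
      have hw' : ((i : ℝ) + 1) / m ≤ f w := hw
      rw [div_le_iff₀ hm0] at hw'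
      show (1 : ℝ) ≤ min 1 (max 0 (m * f w - (i : ℝ)))
      have h1 : (1 : ℝ) ≤ m * f w - (i : ℝ) := by nlinarith
      exact le_min le_rfl (le_max_of_le_right h1)
    · intro w
      exact le_min zero_le_one (le_max_left _ _)
  have hCimeas : ∀ i : ℕ, ((RLmeasure hL) (Ci i)).toReal ≤ Lam (g i) := by
    intro i
    refine ENNReal.toReal_le_of_le_ofReal (hL.nonneg fun w => le_min zero_le_one (le_max_left _ _))
      (RLmeasure_le hL (hCiclosed i) (hgtest i))
  have hsumg : ∀ w, (∑ i ∈ Finset.range M, g i) w ≤ (m • f) w := by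
    intro w
    have happ : (∑ i ∈ Finset.range M, g i) w = ∑ i ∈ Finset.range M, g i w := by
      simp
    rw [happ]
    have hfw0 : 0 ≤ f w := h0 w
    have tele : ∀ i : ℕ, g i w = min (m * f w) ((i : ℝ) + 1) - min (m * f w) (i : ℝ) := by
      intro i
      show min 1 (max 0 (m * f w - (i : ℝ))) = _
      set t := m * f w with ht
      rcases le_total t (i : ℝ) with h | h
      · rw [max_eq_left (by linarith), min_eq_right (by linarith : (0:ℝ) ≤ 1),
          min_eq_left h, min_eq_left (h.trans (by linarith))]
        ring
      · rcases le_total t ((i : ℝ) + 1) with h2 | h2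
        · rw [max_eq_right (by linarith), min_eq_right (by linarith),
            min_eq_left h2, min_eq_right h]
        · rw [max_eq_right (by linarith), min_eq_left (by linarith),
            min_eq_right h2, min_eq_right h]
          ring
    calc ∑ i ∈ Finset.range M, g i w
        = ∑ i ∈ Finset.range M, (min (m * f w) ((i : ℝ) + 1) - min (m * f w) (i : ℝ)) :=
          Finset.sum_congr rfl fun i _ => tele i
      _ = min (m * f w) (M : ℝ) - min (m * f w) ((0 : ℕ) : ℝ) := by
          have := Finset.sum_range_sub (fun i : ℕ => min (m * f w) (i : ℝ)) M
          push_cast at this ⊢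
          exact this
      _ ≤ m * f w := by
          rw [Nat.cast_zero, min_eq_right (by positivity : (0:ℝ) ≤ m * f w), sub_zero]
          exact min_le_left _ _
  have hfinal : ∑ i ∈ Finset.range M, ((RLmeasure hL) (Ci i)).toReal ≤ m * Lam f := by
    calc ∑ i ∈ Finset.range M, ((RLmeasure hL) (Ci i)).toReal
        ≤ ∑ i ∈ Finset.range M, Lam (g i) := Finset.sum_le_sum fun i _ => hCimeas i
      _ = Lam (∑ i ∈ Finset.range M, g i) := (hL.sum _ _).symm
      _ ≤ Lam (m • f) := hL.mono _ _ hsumg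
      _ = m * Lam f := hL.smul m f
  have hmain : ∫ w, f w ∂(RLmeasure hL) ≤ 1 / m + (m * Lam f) * (1 / m) := by
    have h4 : ∑ i ∈ Finset.range M, ((RLmeasure hL) (Ci i)).toReal * (1 / m)
        = (∑ i ∈ Finset.range M, ((RLmeasure hL) (Ci i)).toReal) * (1 / m) := by
      rw [Finset.sum_mul]
    have h5 := mul_le_mul_of_nonneg_right hfinal (by positivity : (0:ℝ) ≤ 1 / m)
    calc ∫ w, f w ∂(RLmeasure hL) ≤ _ := hint1
      _ = 1 / m + ∑ i ∈ Finset.range M, ((RLmeasure hL) (Ci i)).toReal * (1 / m) := hint2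
      _ ≤ 1 / m + (m * Lam f) * (1 / m) := by rw [h4]; linarith
  have h6 : (m * Lam f) * (1 / m) = Lam f := by field_simp
  rw [h6] at hmain
  have h7 : 1 / m < ε := hn
  linarith

end RieszLite4
section AvgHelpers

open Filter

theorem RLabs_sum_div_card_le {α : Type*} (s : Finset α) (hs : s.Nonempty) (u : α → ℝ) {b : ℝ}
    (hb : ∀ g ∈ s, |u g| ≤ b) : |(∑ g ∈ s, u g) / (s.card : ℝ)| ≤ b := by
  have hc : (0 : ℝ) < (s.card : ℝ) := by exact_mod_cast Finset.card_pos.mpr hs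
  have h1 : |∑ g ∈ s, u g| ≤ (s.card : ℝ) * b := by
    calc |∑ g ∈ s, u g| ≤ ∑ g ∈ s, |u g| := Finset.abs_sum_le_sum_abs u s
      _ ≤ ∑ _g ∈ s, b := Finset.sum_le_sum hb
      _ = (s.card : ℝ) * b := by rw [Finset.sum_const, nsmul_eq_mul]
  rw [abs_div, abs_of_pos hc, div_le_iff₀ hc]
  linarith

theorem RLsum_shift_abs_le {G : Type*} [Group G] [DecidableEq G] (s : Finset G) (g : G)
    (u : G → ℝ) {b : ℝ} (hb : ∀ h, |u h| ≤ b) :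
    |∑ h ∈ s, u (g * h) - ∑ h ∈ s, u h| ≤ ((symmDiff (g • s) s).card : ℝ) * b := by
  classical
  have hb0 : 0 ≤ b := le_trans (abs_nonneg _) (hb 1)
  have h1 : ∑ h ∈ s, u (g * h) = ∑ h ∈ g • s, u h := by
    rw [Finset.smul_finset_def, Finset.sum_image]
    · simp [smul_eq_mul]
    · intro a _ c _ h
      simpa [smul_eq_mul] using h
  rw [h1, ← Finset.sum_sdiff_sub_sum_sdiff]
  have hbound : ∀ t : Finset G, |∑ h ∈ t, u h| ≤ (t.card : ℝ) * b := by
    intro t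
    calc |∑ h ∈ t, u h| ≤ ∑ h ∈ t, |u h| := Finset.abs_sum_le_sum_abs u t
      _ ≤ ∑ _h ∈ t, b := Finset.sum_le_sum fun h _ => hb h
      _ = (t.card : ℝ) * b := by rw [Finset.sum_const, nsmul_eq_mul]
  have hcard : ((symmDiff (g • s) s).card : ℝ)
      = ((g • s \ s).card : ℝ) + ((s \ g • s).card : ℝ) := by
    rw [symmDiff_def]
    rw [Finset.sup_eq_union, Finset.card_union_of_disjoint disjoint_sdiff_sdiff]
    push_cast
    ring
  calc |∑ h ∈ g • s \ s, u h - ∑ h ∈ s \ g • s, u h|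
      ≤ |∑ h ∈ g • s \ s, u h| + |∑ h ∈ s \ g • s, u h| := abs_sub _ _
    _ ≤ ((g • s \ s).card : ℝ) * b + ((s \ g • s).card : ℝ) * b :=
        add_le_add (hbound _) (hbound _)
    _ = ((symmDiff (g • s) s).card : ℝ) * b := by rw [hcard]; ring

end AvgHelpers

set_option maxHeartbeats 1000000

/-- for ergodic `μ,ν` and any Følner sequence `F`, if `x ∈ Gen_F(μ)` and
`z ∈ Gen_F(ν)` then `liminf_N (1/|F_N|) Σ_{g∈F_N} d(g•x,g•z) ≥ ρ̄(μ,ν)`. -/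
theorem stmt7 {G : Type*} [Group G] [Countable G] [DecidableEq G]
    {X : Type*} [MetricSpace X] [CompactSpace X] [MeasurableSpace X] [BorelSpace X]
    [MulAction G X] (hact : ∀ g : G, Continuous fun x : X => g • x)
    (F : ℕ → Finset G) (hF : IsFolner F)
    (μ ν : Measure X) [IsProbabilityMeasure μ] [IsProbabilityMeasure ν]
    (hμinv : IsInvariantMeasure G X μ) (hνinv : IsInvariantMeasure G X ν)
    (hμerg : IsErgodicMeasure G X μ) (hνerg : IsErgodicMeasure G X ν)
    (x z : X) (hx : IsGenericPt G X F x μ) (hz : IsGenericPt G X F z ν) :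
    rhoBar G X μ ν ≤
      liminf (fun N => (∑ g ∈ F N, dist (g • x) (g • z)) / ((F N).card : ℝ)) atTop := by
  classical
  obtain ⟨hFne, hFol⟩ := hF
  set w : X × X := (x, z) with hw
  have hcard : ∀ N, (0 : ℝ) < ((F N).card : ℝ) := fun N => by
    exact_mod_cast Finset.card_pos.mpr (hFne N)
  -- the averaging functionals
  set Av : ℕ → C(X × X, ℝ) → ℝ :=
    fun N φ => (∑ g ∈ F N, φ (g • w)) / ((F N).card : ℝ) with hAvdef
  have habs : ∀ N φ, |Av N φ| ≤ ‖φ‖ := fun N φ =>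
    RLabs_sum_div_card_le (F N) (hFne N) _ fun g _ => by
      simpa using φ.norm_coe_le_norm (g • w)
  have hAvadd : ∀ N (φ ψ : C(X × X, ℝ)), Av N (φ + ψ) = Av N φ + Av N ψ := by
    intro N φ ψ
    simp only [hAvdef, ContinuousMap.add_apply, Finset.sum_add_distrib, add_div]
  have hAvsmul : ∀ N (c : ℝ) (φ : C(X × X, ℝ)), Av N (c • φ) = c * Av N φ := by
    intro N c φ
    simp only [hAvdef, ContinuousMap.smul_apply, smul_eq_mul, ← Finset.mul_sum, mul_div_assoc]
  have hAvone : ∀ N, Av N (1 : C(X × X, ℝ)) = 1 := by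
    intro N
    simp only [hAvdef, ContinuousMap.one_apply, Finset.sum_const, nsmul_eq_mul, mul_one]
    exact div_self (ne_of_gt (hcard N))
  have hAvmono : ∀ N (φ ψ : C(X × X, ℝ)), (∀ p, φ p ≤ ψ p) → Av N φ ≤ Av N ψ := by
    intro N φ ψ h
    exact (div_le_div_iff_of_pos_right (hcard N)).mpr (Finset.sum_le_sum fun g _ => h (g • w))
  -- the distance test function
  set fdist : C(X × X, ℝ) := ⟨fun p => dist p.1 p.2, continuous_fst.dist continuous_snd⟩
    with hfdist
  set A : ℕ → ℝ := fun N => (∑ g ∈ F N, dist (g • x) (g • z)) / ((F N).card : ℝ) with hA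
  have hAAv : ∀ N, A N = Av N fdist := fun N => rfl
  set L : ℝ := liminf A atTop with hL
  have hA0 : ∀ N, 0 ≤ A N := fun N =>
    div_nonneg (Finset.sum_nonneg fun g _ => dist_nonneg) (hcard N).le
  have hAb : ∀ N, A N ≤ ‖fdist‖ := fun N => by
    have := habs N fdist
    rw [← hAAv N] at this
    exact (le_abs_self _).trans this
  have hbdd_ge : IsBoundedUnder (· ≥ ·) atTop A := isBoundedUnder_of ⟨0, fun N => hA0 N⟩
  have hbdd_le : IsBoundedUnder (· ≤ ·) atTop A := isBoundedUnder_of ⟨‖fdist‖, fun N => hAb N⟩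
  have hcobdd : IsCoboundedUnder (· ≥ ·) atTop A := hbdd_le.isCoboundedUnder_ge
  -- extraction of a subsequence realizing the liminf
  have hfreq : ∀ n : ℕ, ∃ᶠ N in atTop, |A N - L| < 1 / ((n : ℝ) + 1) := by
    intro n
    have hpos : (0 : ℝ) < 1 / ((n : ℝ) + 1) := by positivity
    have h1 : ∃ᶠ N in atTop, A N < L + 1 / ((n : ℝ) + 1) :=
      frequently_lt_of_liminf_lt hcobdd (by rw [← hL]; linarith)
    have h2 : ∀ᶠ N in atTop, L - 1 / ((n : ℝ) + 1) < A N :=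
      eventually_lt_of_lt_liminf (by rw [← hL]; linarith) hbdd_ge
    refine (h1.and_eventually h2).mono ?_
    rintro N ⟨hlt, hgt⟩
    rw [abs_sub_lt_iff]
    constructor <;> linarith
  obtain ⟨k₀, hk₀mono, hk₀⟩ := Filter.extraction_forall_of_frequently hfreq
  have hk₀tendsto : Tendsto (fun N => A (k₀ N)) atTop (𝓝 L) := by
    rw [← tendsto_sub_nhds_zero_iff]
    refine squeeze_zero_norm (fun n => ?_) tendsto_one_div_add_atTop_nhds_zero_nat
    exact (hk₀ n).le
  -- diagonal extraction on a dense sequence of test functions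
  obtain ⟨φseq, hφdense⟩ := TopologicalSpace.exists_dense_seq C(X × X, ℝ)
  set V : ℕ → ℕ → ℝ := fun N j => Av (k₀ N) (φseq j) with hV
  have hVmem : ∀ N, V N ∈ Set.pi Set.univ fun j => Set.Icc (-‖φseq j‖) ‖φseq j‖ := by
    intro N j _
    exact abs_le.mp (habs (k₀ N) (φseq j))
  have hScompact : IsCompact (Set.pi Set.univ fun j : ℕ => Set.Icc (-‖φseq j‖) ‖φseq j‖) :=
    isCompact_univ_pi fun j => isCompact_Icc
  obtain ⟨y, -, k₁, hk₁mono, hk₁tendsto⟩ := hScompact.tendsto_subseq hVmem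
  set k : ℕ → ℕ := fun N => k₀ (k₁ N) with hk
  have hkmono : StrictMono k := hk₀mono.comp hk₁mono
  have hVconv : ∀ j, Tendsto (fun N => Av (k N) (φseq j)) atTop (𝓝 (y j)) := fun j =>
    tendsto_pi_nhds.mp hk₁tendsto j
  -- convergence for all test functions
  have hconv : ∀ φ : C(X × X, ℝ), ∃ r, Tendsto (fun N => Av (k N) φ) atTop (𝓝 r) := by
    intro φ
    refine cauchySeq_tendsto_of_complete ?_
    rw [Metric.cauchySeq_iff]
    intro ε hε
    obtain ⟨j, hj⟩ := hφdense.exists_dist_lt φ (by positivity : (0 : ℝ) < ε / 3)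
    have hCj : CauchySeq fun N => Av (k N) (φseq j) := (hVconv j).cauchySeq
    rw [Metric.cauchySeq_iff] at hCj
    obtain ⟨N₀, hN₀⟩ := hCj (ε / 3) (by positivity)
    refine ⟨N₀, fun a ha b hb => ?_⟩
    have hdiff : ∀ M, |Av M φ - Av M (φseq j)| ≤ dist φ (φseq j) := by
      intro M
      have h1 : Av M φ - Av M (φseq j) = Av M (φ - φseq j) := by
        simp only [hAvdef, ContinuousMap.sub_apply, Finset.sum_sub_distrib, sub_div]
      rw [h1, dist_eq_norm]
      exact habs M (φ - φseq j)
    have htri : dist (Av (k a) φ) (Av (k b) φ) ≤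
        dist (Av (k a) φ) (Av (k a) (φseq j)) + dist (Av (k a) (φseq j)) (Av (k b) (φseq j))
          + dist (Av (k b) (φseq j)) (Av (k b) φ) := dist_triangle4 _ _ _ _
    have e1 : dist (Av (k a) φ) (Av (k a) (φseq j)) ≤ dist φ (φseq j) := by
      rw [Real.dist_eq]
      exact hdiff (k a)
    have e3 : dist (Av (k b) (φseq j)) (Av (k b) φ) ≤ dist φ (φseq j) := by
      rw [Real.dist_eq, abs_sub_comm]
      exact hdiff (k b)
    have e2 : dist (Av (k a) (φseq j)) (Av (k b) (φseq j)) < ε / 3 := hN₀ a ha b hb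
    have hjφ : dist φ (φseq j) < ε / 3 := by
      first
      | exact hj
      | rwa [dist_comm] at hj
    calc dist (Av (k a) φ) (Av (k b) φ) ≤ _ := htri
      _ < ε / 3 + ε / 3 + ε / 3 := by
        have := add_le_add (add_le_add e1 e2.le) e3
        have h5 : dist φ (φseq j) + ε / 3 + dist φ (φseq j) < ε / 3 + ε / 3 + ε / 3 := by
          linarith
        linarith
      _ = ε := by ring
  choose Lam hLam using hconv
  -- Lam is a positive normalized linear functional
  have hL : RLPos Lam := by
    constructor
    · intro φ ψ
      refine tendsto_nhds_unique (hLam (φ + ψ)) ?_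
      exact (((hLam φ).add (hLam ψ)).congr fun N => (hAvadd (k N) φ ψ).symm)
    · intro c φ
      refine tendsto_nhds_unique (hLam (c • φ)) ?_
      exact (((hLam φ).const_mul c).congr fun N => (hAvsmul (k N) c φ).symm)
    · intro φ ψ h
      exact le_of_tendsto_of_tendsto' (hLam φ) (hLam ψ) fun N => hAvmono (k N) φ ψ h
    · refine tendsto_nhds_unique (hLam 1) ?_
      exact tendsto_const_nhds.congr fun N => (hAvone (k N)).symm
  -- Lam of the distance function is the liminf
  have hLdist : Lam fdist = L := by
    refine tendsto_nhds_unique (hLam fdist) ?_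
    have h1 : Tendsto (fun N => A (k N)) atTop (𝓝 L) :=
      hk₀tendsto.comp hk₁mono.tendsto_atTop
    exact h1.congr fun N => hAAv (k N)
  -- marginals
  set fstMap : C(X × X, X) := ⟨Prod.fst, continuous_fst⟩ with hfstMap
  set sndMap : C(X × X, X) := ⟨Prod.snd, continuous_snd⟩ with hsndMap
  have hfst : ∀ ψ : C(X, ℝ), Lam (ψ.comp fstMap) = ∫ a, ψ a ∂μ := by
    intro ψ
    refine tendsto_nhds_unique (hLam (ψ.comp fstMap)) ?_
    have h1 := (hx ψ).comp hkmono.tendsto_atTop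
    exact h1.congr fun N => rfl
  have hsnd : ∀ ψ : C(X, ℝ), Lam (ψ.comp sndMap) = ∫ a, ψ a ∂ν := by
    intro ψ
    refine tendsto_nhds_unique (hLam (ψ.comp sndMap)) ?_
    have h1 := (hz ψ).comp hkmono.tendsto_atTop
    exact h1.congr fun N => rfl
  -- the diagonal action maps
  have hactK : ∀ g : G, Continuous fun p : X × X => g • p := by
    intro g
    have h1 : (fun p : X × X => g • p) = fun p => (g • p.1, g • p.2) := rfl
    rw [h1]
    exact ((hact g).comp continuous_fst).prodMk ((hact g).comp continuous_snd)
  set Tg : G → C(X × X, X × X) := fun g => ⟨fun p => g • p, hactK g⟩ with hTg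
  have hTinv : ∀ g : G, ∀ ψ : C(X × X, ℝ), Lam (ψ.comp (Tg g)) = Lam ψ := by
    intro g ψ
    have hdiff : ∀ M, |Av M (ψ.comp (Tg g)) - Av M ψ| ≤
        ‖ψ‖ * (((symmDiff (g • F M) (F M)).card : ℝ) / ((F M).card : ℝ)) := by
      intro M
      have h1 : Av M (ψ.comp (Tg g)) =
          (∑ h ∈ F M, ψ ((g * h) • w)) / ((F M).card : ℝ) := by
        simp only [hAvdef]
        congr 1
        refine Finset.sum_congr rfl fun h _ => ?_
        have hgh : (g * h) • w = g • (h • w) := mul_smul g h w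
        rw [hgh]
        rfl
      have h2 : Av M (ψ.comp (Tg g)) - Av M ψ =
          (∑ h ∈ F M, ψ ((g * h) • w) - ∑ h ∈ F M, ψ (h • w)) / ((F M).card : ℝ) := by
        rw [h1, sub_div]
      rw [h2, abs_div, abs_of_pos (hcard M), div_le_iff₀ (hcard M)]
      have h3 := RLsum_shift_abs_le (F M) g (fun h => ψ (h • w))
        (b := ‖ψ‖) (fun h => by simpa using ψ.norm_coe_le_norm (h • w))
      calc |∑ h ∈ F M, ψ ((g * h) • w) - ∑ h ∈ F M, ψ (h • w)|
          ≤ ((symmDiff (g • F M) (F M)).card : ℝ) * ‖ψ‖ := h3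
        _ = ‖ψ‖ * (((symmDiff (g • F M) (F M)).card : ℝ) / ((F M).card : ℝ))
            * ((F M).card : ℝ) := by
            field_simp
    have hzero : Tendsto (fun M => ‖ψ‖ *
        (((symmDiff (g • F M) (F M)).card : ℝ) / ((F M).card : ℝ))) atTop (𝓝 0) := by
      have := (hFol g).const_mul ‖ψ‖
      simpa using this
    have hzero' := hzero.comp hkmono.tendsto_atTop
    have hdiffconv : Tendsto (fun N => Av (k N) (ψ.comp (Tg g)) - Av (k N) ψ) atTop (𝓝 0) :=
      squeeze_zero_norm (fun N => hdiff (k N)) hzero'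
    refine tendsto_nhds_unique (hLam (ψ.comp (Tg g))) ?_
    have h4 : Tendsto (fun N => Av (k N) ψ + (Av (k N) (ψ.comp (Tg g)) - Av (k N) ψ))
        atTop (𝓝 (Lam ψ + 0)) := (hLam ψ).add hdiffconv
    rw [add_zero] at h4
    exact h4.congr fun N => by ring
  -- assemble the joining
  set lam : Measure (X × X) := RLmeasure hL with hlam
  haveI hlamprob : IsProbabilityMeasure lam := RLprob hL
  have hmapfst : lam.map Prod.fst = μ := RLmap_eq hL fstMap μ hfst
  have hmapsnd : lam.map Prod.snd = ν := RLmap_eq hL sndMap ν hsnd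
  have hmapinv : ∀ g : G, lam.map (fun p : X × X => (g • p.1, g • p.2)) = lam := by
    intro g
    have h1 : (fun p : X × X => (g • p.1, g • p.2)) = ⇑(Tg g) := rfl
    rw [h1]
    refine RLmap_self hL (Tg g) (Tg g⁻¹) (fun p => ?_) (hTinv g) (hTinv g⁻¹)
    show g • (g⁻¹ • p) = p
    exact smul_inv_smul g p
  have hjoin : IsJoining G X lam μ ν := ⟨hlamprob, hmapfst, hmapsnd, hmapinv⟩
  -- conclude
  have hmem : (∫ p, dist p.1 p.2 ∂lam) ∈
      {r : ℝ | ∃ lam' : Measure (X × X), IsJoining G X lam' μ ν ∧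
        r = ∫ p, dist p.1 p.2 ∂lam'} := ⟨lam, hjoin, rfl⟩
  have hbddbelow : BddBelow {r : ℝ | ∃ lam' : Measure (X × X), IsJoining G X lam' μ ν ∧
      r = ∫ p, dist p.1 p.2 ∂lam'} := by
    refine ⟨0, ?_⟩
    rintro r ⟨lam', hj', rfl⟩
    exact integral_nonneg fun p => dist_nonneg
  have hr₀ : (∫ p, dist p.1 p.2 ∂lam) ≤ L := by
    have h1 := RLintegral_le hL fdist fun p => dist_nonneg
    rw [hLdist] at h1
    exact h1
  exact le_trans (csInf_le hbddbelow hmem) hr₀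
end
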